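/- arXiv:0909.0119 — 3 statements merged into one kernel-verified Lean document; each statement's English description precedes it below -/
import Mathlib

section
/- (Lemma 1, inequality (5.2).) For any policy π, any t ≥ 1, and any reals x > 0 and τ > 0, P( |θ̂_π(t) − θ| > x and T_π(t) > τ ) ≤ 2 exp( −x² τ / (4σ²) ). -/
open MeasureTheory ProbabilityTheory

noncomputable section

namespace OneArmedBandit

/-- The model of Woodroofe's one-armed bandit problem with covariates: the covariates
`X_t` are i.i.d. with common law `PX`, the noise variables `ε_t` are i.i.d. centered
Gaussian with variance `σ²`, and all these random variables are mutually independent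
under the probability measure `P`. -/
structure Model (Ω : Type) [MeasurableSpace Ω] where
  P : Measure Ω
  isProb : IsProbabilityMeasure P
  X : ℕ → Ω → ℝ
  eps : ℕ → Ω → ℝ
  σ : ℝ
  σ_pos : 0 < σ
  PX : Measure ℝ
  PX_prob : IsProbabilityMeasure PX
  meas_X : ∀ t, Measurable (X t)
  meas_eps : ∀ t, Measurable (eps t)
  law_X : ∀ t, P.map (X t) = PX
  law_eps : ∀ t, P.map (eps t) = gaussianReal 0 ⟨σ ^ 2, sq_nonneg σ⟩
  indep : iIndepFun (Sum.elim X eps) P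

variable {Ω : Type} [MeasurableSpace Ω]

/-- The reward of arm 1 at time `t`: `Y_t = X_t − θ + ε_t` (arm 0 yields reward 0). -/
def Model.Y (M : Model Ω) (θ : ℝ) (t : ℕ) (ω : Ω) : ℝ := M.X t ω - θ + M.eps t ω

/-- `T_π(t) = ∑_{s=1}^t π_s`, the number of pulls of arm 1 up to time `t`. -/
def Tpulls (π : ℕ → Ω → ℝ) (t : ℕ) (ω : Ω) : ℝ := ∑ s ∈ Finset.Icc 1 t, π s ω

/-- The estimator `θ̂_π(t) = T_π(t)⁻¹ ∑_{s=1}^t (X_s − Y_s) π_s`. -/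
def thetaHat (M : Model Ω) (θ : ℝ) (π : ℕ → Ω → ℝ) (t : ℕ) (ω : Ω) : ℝ :=
  (Tpulls π t ω)⁻¹ * ∑ s ∈ Finset.Icc 1 t, (M.X s ω - M.Y θ s ω) * π s ω

/-- `F⁺_t = σ(X_1,…,X_t,X_{t+1}; π_1,…,π_t; π_1Y_1,…,π_tY_t)`. -/
def Fplus (M : Model Ω) (θ : ℝ) (π : ℕ → Ω → ℝ) (t : ℕ) : MeasurableSpace Ω :=
  (⨆ s ∈ Finset.Icc 1 (t + 1), MeasurableSpace.comap (M.X s) inferInstance) ⊔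
  (⨆ s ∈ Finset.Icc 1 t, MeasurableSpace.comap (π s) inferInstance) ⊔
  (⨆ s ∈ Finset.Icc 1 t, MeasurableSpace.comap (fun ω => π s ω * M.Y θ s ω) inferInstance)

/-- `F_t = σ(X_1,…,X_t; π_1,…,π_t; π_1Y_1,…,π_tY_t)`. -/
def Ffilt (M : Model Ω) (θ : ℝ) (π : ℕ → Ω → ℝ) (t : ℕ) : MeasurableSpace Ω :=
  (⨆ s ∈ Finset.Icc 1 t, MeasurableSpace.comap (M.X s) inferInstance) ⊔
  (⨆ s ∈ Finset.Icc 1 t, MeasurableSpace.comap (π s) inferInstance) ⊔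
  (⨆ s ∈ Finset.Icc 1 t, MeasurableSpace.comap (fun ω => π s ω * M.Y θ s ω) inferInstance)

/-- A policy: a `{0,1}`-valued sequence of random variables, `π_t` being measurable
with respect to `F⁺_{t−1}`. -/
structure IsPolicy (M : Model Ω) (θ : ℝ) (π : ℕ → Ω → ℝ) : Prop where
  vals : ∀ t ω, π t ω = 0 ∨ π t ω = 1
  adapted : ∀ t, 1 ≤ t → Measurable[Fplus M θ π (t - 1)] (π t)

/-- The oracle policy `π*_t = I{X_t ≥ θ}`. -/
def oracle (M : Model Ω) (θ : ℝ) (t : ℕ) (ω : Ω) : ℝ := if θ ≤ M.X t ω then 1 else 0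

/-- The inferior sampling rate `S_n(π, π*) = ∑_{t=1}^n P(π_t ≠ π*_t)`. -/
def Srate (M : Model Ω) (θ : ℝ) (π : ℕ → Ω → ℝ) (n : ℕ) : ℝ :=
  ∑ t ∈ Finset.Icc 1 n, (M.P {ω | π t ω ≠ oracle M θ t ω}).toReal

/-- The regret `R_n(π, π*) = E ∑_{t=1}^n |X_t − θ| I{π_t ≠ π*_t}`. -/
def Regret (M : Model Ω) (θ : ℝ) (π : ℕ → Ω → ℝ) (n : ℕ) : ℝ :=
  ∫ ω, (∑ t ∈ Finset.Icc 1 n,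
    |M.X t ω - θ| * (if π t ω ≠ oracle M θ t ω then 1 else 0)) ∂M.P

/-- `(θ, P_X)` belongs to the class `𝒫_α` with constants `C_*, x₀, p`. -/
structure InClass (PX : Measure ℝ) (θ Cstar x0 p α : ℝ) : Prop where
  margin : ∀ x ∈ Set.Ioc (0 : ℝ) x0, (PX (Set.Icc (θ - x) (θ + x))).toReal ≤ Cstar * x ^ α
  p_le : p ≤ (PX (Set.Ici θ)).toReal
  lt_one : (PX (Set.Ici θ)).toReal < 1

/-- `(θ, P_X)` belongs to the class `𝒫'_α`: additionally `∫ |x − θ| P_X(dx) ≤ μ`. -/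
structure InClass' (PX : Measure ℝ) (θ Cstar x0 p α μ : ℝ)
    extends InClass PX θ Cstar x0 p α : Prop where
  moment : ∫ x, |x - θ| ∂PX ≤ μ

end OneArmedBandit

namespace OneArmedBandit

variable {Ω : Type} [MeasurableSpace Ω]

/-- Index set: all `X` indices together with `ε` indices up to `t`. -/
def idxSet (t : ℕ) : Set (ℕ ⊕ ℕ) := (Sum.inr '' Set.Ioi t)ᶜ

/-- The σ-algebra generated by all the `X_s` and by `ε_1, …, ε_t`. -/
def Gsig (M : Model Ω) (t : ℕ) : MeasurableSpace Ω :=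
  ⨆ i ∈ idxSet t, MeasurableSpace.comap (Sum.elim M.X M.eps i) inferInstance

lemma inl_mem_idxSet (s t : ℕ) : Sum.inl s ∈ idxSet t := by
  simp [idxSet]

lemma inr_mem_idxSet {s t : ℕ} (h : s ≤ t) : Sum.inr s ∈ idxSet t := by
  simp [idxSet]
  omega

lemma Gsig_le (M : Model Ω) (t : ℕ) : Gsig M t ≤ ‹MeasurableSpace Ω› := by
  refine iSup₂_le fun i _ => ?_
  rcases i with s | s
  · exact measurable_iff_comap_le.mp (M.meas_X s)
  · exact measurable_iff_comap_le.mp (M.meas_eps s)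

lemma Gsig_mono (M : Model Ω) {t t' : ℕ} (h : t ≤ t') : Gsig M t ≤ Gsig M t' := by
  refine biSup_mono fun i hi => ?_
  rcases i with s | s
  · exact inl_mem_idxSet s t'
  · have hs : s ≤ t := by simpa [idxSet] using hi
    exact inr_mem_idxSet (hs.trans h)

lemma measX_Gsig (M : Model Ω) (s t : ℕ) : Measurable[Gsig M t] (M.X s) := by
  refine Measurable.of_comap_le ?_
  have h := le_iSup₂ (f := fun i (_ : i ∈ idxSet t) =>
    MeasurableSpace.comap (Sum.elim M.X M.eps i) inferInstance) (Sum.inl s) (inl_mem_idxSet s t)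
  exact h

lemma measEps_Gsig (M : Model Ω) {s t : ℕ} (h : s ≤ t) : Measurable[Gsig M t] (M.eps s) := by
  refine Measurable.of_comap_le ?_
  have h2 := le_iSup₂ (f := fun i (_ : i ∈ idxSet t) =>
    MeasurableSpace.comap (Sum.elim M.X M.eps i) inferInstance) (Sum.inr s) (inr_mem_idxSet h)
  exact h2

lemma indep_Gsig_eps (M : Model Ω) (t : ℕ) :
    Indep (Gsig M t) (MeasurableSpace.comap (M.eps (t + 1)) inferInstance) M.P := by
  have h_le : ∀ i, MeasurableSpace.comap (Sum.elim M.X M.eps i) inferInstance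
      ≤ ‹MeasurableSpace Ω› := by
    intro i
    rcases i with s | s
    · exact measurable_iff_comap_le.mp (M.meas_X s)
    · exact measurable_iff_comap_le.mp (M.meas_eps s)
  have h := indep_biSup_compl h_le M.indep.iIndep (idxSet t)
  refine indep_of_indep_of_le_right h ?_
  have hmem : Sum.inr (t + 1) ∈ (idxSet t)ᶜ := by simp [idxSet]
  have h2 := le_iSup₂ (f := fun i (_ : i ∈ (idxSet t)ᶜ) =>
    MeasurableSpace.comap (Sum.elim M.X M.eps i) inferInstance) (Sum.inr (t + 1)) hmem
  simpa using h2

lemma fplus_le (M : Model Ω) (θ : ℝ) (π : ℕ → Ω → ℝ) (hπ : IsPolicy M θ π) :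
    ∀ t, Fplus M θ π t ≤ Gsig M t := by
  intro t
  induction t using Nat.strong_induction_on with
  | _ t ih =>
    have hpi : ∀ s, 1 ≤ s → s ≤ t → Measurable[Gsig M t] (π s) := by
      intro s h1 h2
      have h3 : Fplus M θ π (s - 1) ≤ Gsig M t :=
        (ih (s - 1) (by omega)).trans (Gsig_mono M (by omega))
      exact (hπ.adapted s h1).mono h3 le_rfl
    refine sup_le (sup_le ?_ ?_) ?_
    · refine iSup₂_le fun s _ => ?_
      exact measurable_iff_comap_le.mp (measX_Gsig M s t)
    · refine iSup₂_le fun s hs => ?_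
      rw [Finset.mem_Icc] at hs
      exact measurable_iff_comap_le.mp (hpi s hs.1 hs.2)
    · refine iSup₂_le fun s hs => ?_
      rw [Finset.mem_Icc] at hs
      have hY : Measurable[Gsig M t] (M.Y θ s) := by
        unfold Model.Y
        exact ((measX_Gsig M s t).sub measurable_const).add (measEps_Gsig M hs.2)
      exact measurable_iff_comap_le.mp ((hpi s hs.1 hs.2).mul hY)

lemma meas_pi_G (M : Model Ω) {θ : ℝ} {π : ℕ → Ω → ℝ} (hπ : IsPolicy M θ π)
    {s t : ℕ} (h1 : 1 ≤ s) (h2 : s ≤ t + 1) : Measurable[Gsig M t] (π s) :=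
  (hπ.adapted s h1).mono ((fplus_le M θ π hπ (s - 1)).trans (Gsig_mono M (by omega))) le_rfl

lemma meas_pi (M : Model Ω) {θ : ℝ} {π : ℕ → Ω → ℝ} (hπ : IsPolicy M θ π)
    {s : ℕ} (h1 : 1 ≤ s) : Measurable (π s) :=
  (meas_pi_G M hπ (t := s - 1) h1 (by omega)).mono (Gsig_le M _) le_rfl

lemma lintegral_exp_eps (M : Model Ω) (t : ℕ) (lam : ℝ) :
    ∫⁻ ω, ENNReal.ofReal (Real.exp (lam * M.eps t ω)) ∂M.P
      = ENNReal.ofReal (Real.exp (lam ^ 2 * M.σ ^ 2 / 2)) := by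
  have hσ2 : (0 : ℝ) < M.σ ^ 2 := pow_pos M.σ_pos 2
  set v : NNReal := ⟨M.σ ^ 2, sq_nonneg M.σ⟩ with hv_def
  have hv : v ≠ 0 := by
    intro h
    have := congrArg NNReal.toReal h
    simp only [hv_def, NNReal.coe_mk, NNReal.coe_zero] at this
    exact absurd this hσ2.ne'
  have hmeas : Measurable fun x : ℝ => ENNReal.ofReal (Real.exp (lam * x)) :=
    ENNReal.measurable_ofReal.comp (Real.measurable_exp.comp (measurable_const_mul lam))
  have hmap : M.P.map (M.eps t) = gaussianReal 0 v := M.law_eps t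
  rw [← lintegral_map hmeas (M.meas_eps t), hmap, gaussianReal_of_var_ne_zero _ hv,
    lintegral_withDensity_eq_lintegral_mul _ (measurable_gaussianPDF _ _) hmeas]
  have key : ∀ x : ℝ, (gaussianPDF 0 v * fun x => ENNReal.ofReal (Real.exp (lam * x))) x
      = ENNReal.ofReal (Real.exp (lam ^ 2 * M.σ ^ 2 / 2)) * gaussianPDF (lam * M.σ ^ 2) v x := by
    intro x
    have hvr : (v : ℝ) = M.σ ^ 2 := rfl
    simp only [Pi.mul_apply, gaussianPDF, ← ENNReal.ofReal_mul (gaussianPDFReal_nonneg _ _ _),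
      ← ENNReal.ofReal_mul (Real.exp_nonneg _)]
    congr 1
    unfold gaussianPDFReal
    have hexp : -(x - 0) ^ 2 / (2 * M.σ ^ 2) + lam * x
        = lam ^ 2 * M.σ ^ 2 / 2 + -(x - lam * M.σ ^ 2) ^ 2 / (2 * M.σ ^ 2) := by
      field_simp [M.σ_pos.ne']
      ring
    rw [hvr, mul_assoc, ← Real.exp_add, hexp, Real.exp_add]
    ring
  simp only [key]
  rw [lintegral_const_mul _ (measurable_gaussianPDF _ _), lintegral_gaussianPDF_eq_one _ hv,
    mul_one]

lemma key_bound (M : Model Ω) (θ : ℝ) (π : ℕ → Ω → ℝ) (hπ : IsPolicy M θ π) (lam : ℝ) :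
    ∀ t, ∫⁻ ω, ENNReal.ofReal
        (∏ s ∈ Finset.Icc 1 t,
          Real.exp ((lam * M.eps s ω - lam ^ 2 * M.σ ^ 2 / 2) * π s ω)) ∂M.P ≤ 1 := by
  haveI : IsProbabilityMeasure M.P := M.isProb
  intro t
  induction t with
  | zero =>
    simp only [show Finset.Icc 1 0 = (∅ : Finset ℕ) from rfl, Finset.prod_empty,
      ENNReal.ofReal_one, lintegral_one, measure_univ, le_refl]
  | succ t ih =>
    set c : ℝ := lam ^ 2 * M.σ ^ 2 / 2 with hc
    set W : Ω → ℝ := fun ω => ∏ s ∈ Finset.Icc 1 t, Real.exp ((lam * M.eps s ω - c) * π s ω)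
      with hW_def
    have hW_nonneg : ∀ ω, 0 ≤ W ω := fun ω => Finset.prod_nonneg fun s _ => (Real.exp_pos _).le
    have hIcc : Finset.Icc 1 (t + 1) = insert (t + 1) (Finset.Icc 1 t) := by
      ext s; simp only [Finset.mem_Icc, Finset.mem_insert]; omega
    have hnot : (t + 1) ∉ Finset.Icc 1 t := by simp
    -- measurability
    have hW_measG : Measurable[Gsig M t] W := by
      refine Finset.measurable_prod _ fun s hs => ?_
      rw [Finset.mem_Icc] at hs
      refine Real.measurable_exp.comp (Measurable.mul ?_ ?_)
      · exact ((measEps_Gsig M hs.2).const_mul lam).sub measurable_const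
      · exact meas_pi_G M hπ hs.1 (by omega)
    have hpi_measG : Measurable[Gsig M t] (π (t + 1)) := meas_pi_G M hπ (by omega) le_rfl
    have hf_measG : Measurable[Gsig M t]
        (fun ω => ENNReal.ofReal (Real.exp (-c) * (π (t + 1) ω * W ω))) :=
      ((hpi_measG.mul hW_measG).const_mul (Real.exp (-c))).ennreal_ofReal
    have hg_measC : Measurable[MeasurableSpace.comap (M.eps (t + 1)) inferInstance]
        (fun ω => ENNReal.ofReal (Real.exp (lam * M.eps (t + 1) ω))) := by
      have heps : Measurable[MeasurableSpace.comap (M.eps (t + 1)) inferInstance]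
          (M.eps (t + 1)) := Measurable.of_comap_le le_rfl
      exact ((heps.const_mul lam).exp).ennreal_ofReal
    have hW_meas : Measurable W := hW_measG.mono (Gsig_le M t) le_rfl
    have hpi_meas : Measurable (π (t + 1)) := meas_pi M hπ (by omega)
    -- pointwise splitting
    have hsplit : ∀ ω, ENNReal.ofReal
        (∏ s ∈ Finset.Icc 1 (t + 1), Real.exp ((lam * M.eps s ω - c) * π s ω))
        = ENNReal.ofReal (Real.exp (-c) * (π (t + 1) ω * W ω))
            * ENNReal.ofReal (Real.exp (lam * M.eps (t + 1) ω))
          + ENNReal.ofReal ((1 - π (t + 1) ω) * W ω) := by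
      intro ω
      rw [hIcc, Finset.prod_insert hnot]
      show ENNReal.ofReal (Real.exp ((lam * M.eps (t + 1) ω - c) * π (t + 1) ω) * W ω) = _
      rcases hπ.vals (t + 1) ω with h | h <;> rw [h]
      · simp
      · have h1 : (0 : ℝ) ≤ Real.exp (-c) * (1 * W ω) :=
          mul_nonneg (Real.exp_nonneg _) (by rw [one_mul]; exact hW_nonneg ω)
        rw [← ENNReal.ofReal_mul h1]
        simp only [mul_one, one_mul, sub_self, zero_mul, ENNReal.ofReal_zero, add_zero]
        congr 1
        rw [sub_eq_add_neg, Real.exp_add]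
        ring
    calc ∫⁻ ω, ENNReal.ofReal
          (∏ s ∈ Finset.Icc 1 (t + 1), Real.exp ((lam * M.eps s ω - c) * π s ω)) ∂M.P
        = (∫⁻ ω, ENNReal.ofReal (Real.exp (-c) * (π (t + 1) ω * W ω))
              * ENNReal.ofReal (Real.exp (lam * M.eps (t + 1) ω)) ∂M.P)
          + ∫⁻ ω, ENNReal.ofReal ((1 - π (t + 1) ω) * W ω) ∂M.P := by
          simp_rw [hsplit]
          rw [lintegral_add_right]
          exact ((measurable_const.sub hpi_meas).mul hW_meas).ennreal_ofReal
      _ = (∫⁻ ω, ENNReal.ofReal (Real.exp (-c) * (π (t + 1) ω * W ω)) ∂M.P)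
            * (∫⁻ ω, ENNReal.ofReal (Real.exp (lam * M.eps (t + 1) ω)) ∂M.P)
          + ∫⁻ ω, ENNReal.ofReal ((1 - π (t + 1) ω) * W ω) ∂M.P := by
          rw [lintegral_mul_eq_lintegral_mul_lintegral_of_independent_measurableSpace
            (Gsig_le M t) (measurable_iff_comap_le.mp (M.meas_eps (t + 1)))
            (indep_Gsig_eps M t) hf_measG hg_measC]
      _ = (ENNReal.ofReal (Real.exp (-c)) * ∫⁻ ω, ENNReal.ofReal (π (t + 1) ω * W ω) ∂M.P)
            * ENNReal.ofReal (Real.exp c)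
          + ∫⁻ ω, ENNReal.ofReal ((1 - π (t + 1) ω) * W ω) ∂M.P := by
          rw [lintegral_exp_eps M (t + 1) lam, ← hc]
          congr 1
          rw [← lintegral_const_mul _ (f := fun ω => ENNReal.ofReal (π (t + 1) ω * W ω)) ((hpi_meas.mul hW_meas).ennreal_ofReal)]
          congr 1
          refine lintegral_congr fun ω => ?_
          rw [← ENNReal.ofReal_mul (Real.exp_nonneg _)]
      _ = (∫⁻ ω, ENNReal.ofReal (π (t + 1) ω * W ω) ∂M.P)
          + ∫⁻ ω, ENNReal.ofReal ((1 - π (t + 1) ω) * W ω) ∂M.P := by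
          rw [mul_comm (ENNReal.ofReal (Real.exp (-c))) _, mul_assoc,
            ← ENNReal.ofReal_mul (Real.exp_nonneg _), ← Real.exp_add]
          simp
      _ = ∫⁻ ω, ENNReal.ofReal (W ω) ∂M.P := by
          rw [← lintegral_add_left (f := fun ω => ENNReal.ofReal (π (t + 1) ω * W ω)) ((hpi_meas.mul hW_meas).ennreal_ofReal)]
          refine lintegral_congr fun ω => ?_
          rcases hπ.vals (t + 1) ω with h | h <;> rw [h] <;> simp
      _ ≤ 1 := ih

lemma calc_ineq {σ2 x τ S T : ℝ} (hσ2 : 0 < σ2) (hx : 0 < x) (hτ : 0 < τ)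
    (hT : τ < T) (hS : x * T < S) :
    x ^ 2 * τ / (2 * σ2) ≤ (x / σ2) * S - ((x / σ2) ^ 2 * σ2 / 2) * T := by
  rw [div_le_iff₀ (by positivity : (0 : ℝ) < 2 * σ2)]
  have e : ((x / σ2) * S - ((x / σ2) ^ 2 * σ2 / 2) * T) * (2 * σ2) = 2 * x * S - x ^ 2 * T := by
    field_simp
  rw [e]
  nlinarith [mul_lt_mul_of_pos_left hS hx, mul_pos (mul_pos hx hx) (sub_pos.mpr hT)]

/-- Lemma 1, inequality (5.2): for any policy `π`, any `t ≥ 1` and any `x, τ > 0`,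
`P(|θ̂_π(t) − θ| > x, T_π(t) > τ) ≤ 2 exp(−x²τ/(4σ²))`. -/
theorem lemma1_tail_bound (Ω : Type) [MeasurableSpace Ω] (M : Model Ω) (θ : ℝ)
    (π : ℕ → Ω → ℝ) (hπ : IsPolicy M θ π) (t : ℕ) (ht : 1 ≤ t)
    (x τ : ℝ) (hx : 0 < x) (hτ : 0 < τ) :
    (M.P {ω | x < |thetaHat M θ π t ω - θ| ∧ τ < Tpulls π t ω}).toReal ≤
      2 * Real.exp (-(x ^ 2 * τ) / (4 * M.σ ^ 2)) := by
  haveI : IsProbabilityMeasure M.P := M.isProb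
  have hσ2 : (0 : ℝ) < M.σ ^ 2 := pow_pos M.σ_pos 2
  set lam : ℝ := x / M.σ ^ 2 with hlam
  have hlam_pos : 0 < lam := div_pos hx hσ2
  set b : ℝ := x ^ 2 * τ / (2 * M.σ ^ 2) with hb
  set a : ENNReal := ENNReal.ofReal (Real.exp b) with ha
  set F : ℝ → Ω → ENNReal := fun L ω => ENNReal.ofReal
    (∏ s ∈ Finset.Icc 1 t, Real.exp ((L * M.eps s ω - L ^ 2 * M.σ ^ 2 / 2) * π s ω)) with hF
  have hF_meas : ∀ L, Measurable (F L) := by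
    intro L
    refine Measurable.ennreal_ofReal ?_
    refine Finset.measurable_prod _ fun s hs => ?_
    rw [Finset.mem_Icc] at hs
    exact (((M.meas_eps s).const_mul L).sub measurable_const).mul (meas_pi M hπ hs.1) |>.exp
  -- the inclusion into the two one-sided events
  have hsub : {ω | x < |thetaHat M θ π t ω - θ| ∧ τ < Tpulls π t ω}
      ⊆ {ω | a ≤ F lam ω} ∪ {ω | a ≤ F (-lam) ω} := by
    rintro ω ⟨h1, h2⟩
    have hT_pos : 0 < Tpulls π t ω := hτ.trans h2
    set S : ℝ := ∑ s ∈ Finset.Icc 1 t, M.eps s ω * π s ω with hS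
    have hdiff : thetaHat M θ π t ω - θ = -((Tpulls π t ω)⁻¹ * S) := by
      unfold thetaHat
      have hsum : ∑ s ∈ Finset.Icc 1 t, (M.X s ω - M.Y θ s ω) * π s ω
          = θ * Tpulls π t ω - S := by
        unfold Model.Y Tpulls
        rw [hS, Finset.mul_sum, ← Finset.sum_sub_distrib]
        exact Finset.sum_congr rfl fun s _ => by ring
      rw [hsum]
      field_simp
      ring
    have habs : x * Tpulls π t ω < |S| := by
      rw [hdiff, abs_neg, abs_mul, abs_inv, abs_of_pos hT_pos, inv_mul_eq_div] at h1
      exact (lt_div_iff₀ hT_pos).mp h1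
    have hsum2 : ∀ L : ℝ, ∑ s ∈ Finset.Icc 1 t,
        (L * M.eps s ω - L ^ 2 * M.σ ^ 2 / 2) * π s ω
        = L * S - (L ^ 2 * M.σ ^ 2 / 2) * Tpulls π t ω := by
      intro L
      unfold Tpulls
      rw [hS, Finset.mul_sum, Finset.mul_sum, ← Finset.sum_sub_distrib]
      exact Finset.sum_congr rfl fun s _ => by ring
    rcases lt_abs.mp habs with h3 | h3
    · left
      show a ≤ F lam ω
      rw [hF]
      simp only
      rw [← Real.exp_sum, hsum2 lam]
      refine ENNReal.ofReal_le_ofReal (Real.exp_le_exp.mpr ?_)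
      have := calc_ineq hσ2 hx hτ h2 h3
      rw [hb, hlam]
      calc x ^ 2 * τ / (2 * M.σ ^ 2)
          ≤ (x / M.σ ^ 2) * S - ((x / M.σ ^ 2) ^ 2 * M.σ ^ 2 / 2) * Tpulls π t ω := this
        _ = x / M.σ ^ 2 * S - (x / M.σ ^ 2) ^ 2 * M.σ ^ 2 / 2 * Tpulls π t ω := by ring
    · right
      show a ≤ F (-lam) ω
      rw [hF]
      simp only
      rw [← Real.exp_sum, hsum2 (-lam)]
      refine ENNReal.ofReal_le_ofReal (Real.exp_le_exp.mpr ?_)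
      have h4 : x * Tpulls π t ω < -S := h3
      have := calc_ineq hσ2 hx hτ h2 h4
      rw [hb, hlam]
      calc x ^ 2 * τ / (2 * M.σ ^ 2)
          ≤ (x / M.σ ^ 2) * (-S) - ((x / M.σ ^ 2) ^ 2 * M.σ ^ 2 / 2) * Tpulls π t ω := this
        _ = -(x / M.σ ^ 2) * S - (-(x / M.σ ^ 2)) ^ 2 * M.σ ^ 2 / 2 * Tpulls π t ω := by ring
  -- Markov bound for each one-sided event
  have hmarkov : ∀ L : ℝ, M.P {ω | a ≤ F L ω} ≤ a⁻¹ := by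
    intro L
    rw [ENNReal.le_inv_iff_mul_le]
    calc M.P {ω | a ≤ F L ω} * a = a * M.P {ω | a ≤ F L ω} := mul_comm _ _
      _ ≤ ∫⁻ ω, F L ω ∂M.P := mul_meas_ge_le_lintegral₀ (hF_meas L).aemeasurable a
      _ ≤ 1 := key_bound M θ π hπ L t
  have hmain : M.P {ω | x < |thetaHat M θ π t ω - θ| ∧ τ < Tpulls π t ω}
      ≤ ENNReal.ofReal (2 * Real.exp (-b)) := by
    calc M.P {ω | x < |thetaHat M θ π t ω - θ| ∧ τ < Tpulls π t ω}
        ≤ M.P ({ω | a ≤ F lam ω} ∪ {ω | a ≤ F (-lam) ω}) := measure_mono hsub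
      _ ≤ M.P {ω | a ≤ F lam ω} + M.P {ω | a ≤ F (-lam) ω} := measure_union_le _ _
      _ ≤ a⁻¹ + a⁻¹ := add_le_add (hmarkov lam) (hmarkov (-lam))
      _ = 2 * a⁻¹ := (two_mul _).symm
      _ = ENNReal.ofReal (2 * Real.exp (-b)) := by
          rw [ha, ← ENNReal.ofReal_inv_of_pos (Real.exp_pos b), ← Real.exp_neg,
            ENNReal.ofReal_mul (by norm_num : (0:ℝ) ≤ 2), ENNReal.ofReal_ofNat]
  have h5 := ENNReal.toReal_le_of_le_ofReal (by positivity) hmain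
  refine h5.trans ?_
  have h6 : -b ≤ -(x ^ 2 * τ) / (4 * M.σ ^ 2) := by
    rw [hb, neg_div]
    refine neg_le_neg ?_
    refine div_le_div_of_nonneg_left (by positivity) (by positivity) (by nlinarith)
  nlinarith [Real.exp_le_exp.mpr h6, Real.exp_pos (-b)]
end OneArmedBandit
end
end

section
/- (Lemma 2.) Assume P_X([θ,∞)) ≥ p for some p ∈ (0,1), and let (δ_t)_{t≥1} be a nondecreasing sequence of positive reals. Let π̂ be the nearly-myopic policy: π̂_1 = 1 and π̂_{t+1} = I{X_{t+1} ≥ θ̂_π̂(t) − δ_t/√(T_π̂(t))}. Then for every z ∈ (0, 1/4] and every t ≥ 2, P( T_π̂(t) ≤ z p t ) ≤ exp( −p² z² t / 2 ) + 4 z t exp( −δ²_{⌊(1−2z)t⌋} / (4σ²) ). -/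
open MeasureTheory ProbabilityTheory

noncomputable section

namespace OneArmedBandit

variable {Ω : Type} [MeasurableSpace Ω]

/-- The threshold sequence `δ_t = 2σ√(3 ln t)`. -/
def deltaNM (σ : ℝ) (t : ℕ) : ℝ := 2 * σ * Real.sqrt (3 * Real.log t)

/-- `π` is the nearly-myopic policy associated with the threshold sequence `δ`:
`π_1 = 1` and `π_{t+1} = I{X_{t+1} ≥ θ̂_π(t) − δ_t/√(T_π(t))}`. -/
structure IsNearlyMyopic (M : Model Ω) (θ : ℝ) (δ : ℕ → ℝ) (π : ℕ → Ω → ℝ) : Prop where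
  first : ∀ ω, π 1 ω = 1
  step : ∀ t ω, 1 ≤ t →
    π (t + 1) ω =
      if thetaHat M θ π t ω - δ t / Real.sqrt (Tpulls π t ω) ≤ M.X (t + 1) ω then 1 else 0

/-- `t₀ = min{t ∈ {1,…,n} : x₀√(pt) ≥ 8σ√(3 ln t)}`. -/
def tZero (σ x0 p : ℝ) (n : ℕ) : ℕ :=
  sInf {t : ℕ | t ∈ Finset.Icc 1 n ∧
    8 * σ * Real.sqrt (3 * Real.log t) ≤ x0 * Real.sqrt (p * t)}

/-- `t_β = min{t ∈ {1,…,n} : t ≥ (8√3 σ √(ln t / p))^{4β/(β−2)}}`, for `β > 2`. -/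
def tBeta (σ p β : ℝ) (n : ℕ) : ℕ :=
  sInf {t : ℕ | t ∈ Finset.Icc 1 n ∧
    (8 * Real.sqrt 3 * σ * Real.sqrt (Real.log t / p)) ^ (4 * β / (β - 2)) ≤ (t : ℝ)}

end OneArmedBandit

namespace OneArmedBandit


variable {Ω : Type} [MeasurableSpace Ω]

/-- The combined family of covariates and noises. -/
def fam (M : Model Ω) : ℕ ⊕ ℕ → Ω → ℝ := Sum.elim M.X M.eps

lemma meas_fam (M : Model Ω) (i : ℕ ⊕ ℕ) : Measurable (fam M i) := by
  cases i with
  | inl n => exact M.meas_X n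
  | inr n => exact M.meas_eps n

/-- σ-algebra generated by a set of indices. -/
def Hgen (M : Model Ω) (S : Set (ℕ ⊕ ℕ)) : MeasurableSpace Ω :=
  ⨆ i ∈ S, MeasurableSpace.comap (fam M i) inferInstance

lemma Hgen_le (M : Model Ω) (S : Set (ℕ ⊕ ℕ)) : Hgen M S ≤ ‹MeasurableSpace Ω› :=
  iSup₂_le fun i _ => (meas_fam M i).comap_le

lemma Hgen_mono (M : Model Ω) {S T : Set (ℕ ⊕ ℕ)} (h : S ⊆ T) : Hgen M S ≤ Hgen M T :=
  biSup_mono h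

lemma measurable_fam_Hgen (M : Model Ω) {S : Set (ℕ ⊕ ℕ)} {i : ℕ ⊕ ℕ} (hi : i ∈ S) :
    Measurable[Hgen M S] (fam M i) := by
  rw [measurable_iff_comap_le]
  exact le_iSup₂ (f := fun i (_ : i ∈ S) => MeasurableSpace.comap (fam M i) inferInstance) i hi

lemma indep_Hgen (M : Model Ω) {S T : Set (ℕ ⊕ ℕ)} (h : Disjoint S T) :
    Indep (Hgen M S) (Hgen M T) M.P := by
  have h1 : iIndep (fun i => MeasurableSpace.comap (fam M i) inferInstance) M.P :=
    (iIndepFun_iff_iIndep _ _ _).1 M.indep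
  have h2 := indep_biSup_compl (fun i => (meas_fam M i).comap_le) h1 S
  exact indep_of_indep_of_le_right h2 (biSup_mono h.subset_compl_left)

/-- σ-algebra of all covariates and noises up to time `k`. -/
def HX (M : Model Ω) (k : ℕ) : MeasurableSpace Ω :=
  Hgen M (Set.range Sum.inl ∪ Sum.inr '' Set.Iic k)

lemma HX_le (M : Model Ω) (k : ℕ) : HX M k ≤ ‹MeasurableSpace Ω› := Hgen_le M _

lemma HX_mono (M : Model Ω) {k l : ℕ} (h : k ≤ l) : HX M k ≤ HX M l :=
  Hgen_mono M (Set.union_subset_union_right _ (Set.image_mono (Set.Iic_subset_Iic.2 h)))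

lemma measurable_X_HX (M : Model Ω) (k s : ℕ) : Measurable[HX M k] (M.X s) :=
  measurable_fam_Hgen M (i := Sum.inl s) (Or.inl ⟨s, rfl⟩)

lemma measurable_eps_HX (M : Model Ω) {k s : ℕ} (h : s ≤ k) : Measurable[HX M k] (M.eps s) :=
  measurable_fam_Hgen M (i := Sum.inr s) (Or.inr ⟨s, h, rfl⟩)

lemma indep_eps_HX (M : Model Ω) (k : ℕ) :
    Indep (HX M k) (MeasurableSpace.comap (M.eps (k + 1)) inferInstance) M.P := by
  have : MeasurableSpace.comap (M.eps (k + 1)) inferInstance = Hgen M {Sum.inr (k + 1)} := by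
    simp [Hgen, fam]
  rw [this]
  refine indep_Hgen M ?_
  rw [Set.disjoint_singleton_right]
  rintro (⟨n, hn⟩ | ⟨n, hn, hn'⟩)
  · simp at hn
  · rw [Set.mem_Iic] at hn
    cases Sum.inr.inj hn'
    omega


section PolicyMeas

variable {Ω : Type} [MeasurableSpace Ω] {M : Model Ω} {θ : ℝ} {π : ℕ → Ω → ℝ}

lemma measurable_pi_HX (hπ : IsPolicy M θ π) :
    ∀ s, 1 ≤ s → Measurable[HX M (s - 1)] (π s) := by
  intro s
  induction s using Nat.strong_induction_on with
  | _ s ih =>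
    intro hs
    have hF : Fplus M θ π (s - 1) ≤ HX M (s - 1) := by
      refine sup_le (sup_le ?_ ?_) ?_
      · exact iSup₂_le fun u _ => measurable_iff_comap_le.1 (measurable_X_HX M _ u)
      · refine iSup₂_le fun u hu => measurable_iff_comap_le.1 ?_
        rw [Finset.mem_Icc] at hu
        exact (ih u (by omega) hu.1).mono (HX_mono M (by omega)) le_rfl
      · refine iSup₂_le fun u hu => measurable_iff_comap_le.1 ?_
        rw [Finset.mem_Icc] at hu
        have h1 : Measurable[HX M (s - 1)] (π u) :=
          (ih u (by omega) hu.1).mono (HX_mono M (by omega)) le_rfl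
        have h2 : Measurable[HX M (s - 1)] (M.Y θ u) := by
          have hX : Measurable[HX M (s - 1)] (M.X u) := measurable_X_HX M _ u
          have he : Measurable[HX M (s - 1)] (M.eps u) := measurable_eps_HX M (by omega)
          exact (hX.sub measurable_const).add he
        exact h1.mul h2
    exact (hπ.adapted s hs).mono hF le_rfl

lemma measurable_pi (hπ : IsPolicy M θ π) {s : ℕ} (hs : 1 ≤ s) : Measurable (π s) :=
  (measurable_pi_HX hπ s hs).mono (HX_le M _) le_rfl

lemma measurable_Tpulls_HX (hπ : IsPolicy M θ π) (k : ℕ) :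
    Measurable[HX M k] (fun ω => Tpulls π k ω) := by
  refine Finset.measurable_sum _ fun u hu => ?_
  rw [Finset.mem_Icc] at hu
  exact (measurable_pi_HX hπ u hu.1).mono (HX_mono M (by omega)) le_rfl

lemma measurable_Tpulls (hπ : IsPolicy M θ π) (k : ℕ) :
    Measurable (fun ω => Tpulls π k ω) :=
  (measurable_Tpulls_HX hπ k).mono (HX_le M _) le_rfl

/-- The noise part of the estimator: `∑_{s=1}^k ε_s π_s`. -/
def Mpart (M : Model Ω) (π : ℕ → Ω → ℝ) (k : ℕ) (ω : Ω) : ℝ :=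
  ∑ s ∈ Finset.Icc 1 k, M.eps s ω * π s ω

lemma measurable_Mpart_HX (hπ : IsPolicy M θ π) (k : ℕ) :
    Measurable[HX M k] (fun ω => Mpart M π k ω) := by
  refine Finset.measurable_sum _ fun u hu => ?_
  rw [Finset.mem_Icc] at hu
  exact (measurable_eps_HX M hu.2).mul
    ((measurable_pi_HX hπ u hu.1).mono (HX_mono M (by omega)) le_rfl)

lemma measurable_Mpart (hπ : IsPolicy M θ π) (k : ℕ) :
    Measurable (fun ω => Mpart M π k ω) :=
  (measurable_Mpart_HX hπ k).mono (HX_le M _) le_rfl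

lemma pi_nonneg (hπ : IsPolicy M θ π) (s : ℕ) (ω : Ω) : 0 ≤ π s ω := by
  rcases hπ.vals s ω with h | h <;> rw [h] <;> norm_num

lemma pi_le_one (hπ : IsPolicy M θ π) (s : ℕ) (ω : Ω) : π s ω ≤ 1 := by
  rcases hπ.vals s ω with h | h <;> rw [h] <;> norm_num

lemma Tpulls_succ (π : ℕ → Ω → ℝ) (k : ℕ) (ω : Ω) :
    Tpulls π (k + 1) ω = Tpulls π k ω + π (k + 1) ω := by
  rw [Tpulls, Tpulls, ← Finset.sum_Icc_succ_top (by omega)]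

lemma Mpart_succ (M : Model Ω) (π : ℕ → Ω → ℝ) (k : ℕ) (ω : Ω) :
    Mpart M π (k + 1) ω = Mpart M π k ω + M.eps (k + 1) ω * π (k + 1) ω := by
  rw [Mpart, Mpart, ← Finset.sum_Icc_succ_top (by omega)]

lemma Tpulls_nonneg (hπ : IsPolicy M θ π) (k : ℕ) (ω : Ω) : 0 ≤ Tpulls π k ω :=
  Finset.sum_nonneg fun u _ => pi_nonneg hπ u ω

lemma Tpulls_mono (hπ : IsPolicy M θ π) {k l : ℕ} (h : k ≤ l) (ω : Ω) :
    Tpulls π k ω ≤ Tpulls π l ω := by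
  refine Finset.sum_le_sum_of_subset_of_nonneg ?_ fun u _ _ => pi_nonneg hπ u ω
  exact Finset.Icc_subset_Icc le_rfl h

lemma one_le_Tpulls (hπ : IsPolicy M θ π) (hnm : IsNearlyMyopic M θ δ' π) {k : ℕ}
    (hk : 1 ≤ k) (ω : Ω) : 1 ≤ Tpulls π k ω := by
  have h1 : Tpulls π 1 ω = 1 := by
    rw [Tpulls]
    simp [hnm.first ω]
  calc (1 : ℝ) = Tpulls π 1 ω := h1.symm
  _ ≤ Tpulls π k ω := Tpulls_mono hπ hk ω

lemma Tpulls_nat (hπ : IsPolicy M θ π) (k : ℕ) (ω : Ω) :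
    ∃ n : ℕ, Tpulls π k ω = (n : ℝ) := by
  induction k with
  | zero => exact ⟨0, by simp [Tpulls]⟩
  | succ k ih =>
    obtain ⟨n, hn⟩ := ih
    rcases hπ.vals (k + 1) ω with h | h
    · exact ⟨n, by rw [Tpulls_succ, hn, h, add_zero]⟩
    · exact ⟨n + 1, by rw [Tpulls_succ, hn, h]; push_cast; ring⟩

end PolicyMeas
open scoped NNReal ENNReal

section Gaussian

variable {Ω : Type} [MeasurableSpace Ω]

lemma gaussianPDFReal_mul_exp (c x : ℝ) {v : ℝ≥0} (hv : 0 < (v : ℝ)) :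
    gaussianPDFReal 0 v x * Real.exp (c * x) =
      Real.exp (c ^ 2 * v / 2) * gaussianPDFReal (c * v) v x := by
  rw [gaussianPDFReal, gaussianPDFReal]
  rw [mul_assoc, ← Real.exp_add, mul_left_comm, ← Real.exp_add]
  congr 2
  field_simp
  ring

lemma integral_exp_gaussianReal (c : ℝ) {v : ℝ≥0} (hv : v ≠ 0) :
    (∫ x, Real.exp (c * x) ∂(gaussianReal 0 v)) = Real.exp (c ^ 2 * v / 2) ∧
      Integrable (fun x => Real.exp (c * x)) (gaussianReal 0 v) := by
  have hv' : 0 < (v : ℝ) := by positivity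
  have hpdf : gaussianPDF 0 v = fun x => ((Real.toNNReal (gaussianPDFReal 0 v x) : ℝ≥0) : ℝ≥0∞) :=
    rfl
  have hmeas : Measurable fun x => Real.toNNReal (gaussianPDFReal 0 v x) :=
    (measurable_gaussianPDFReal 0 v).real_toNNReal
  have hkey : ∀ x, (Real.toNNReal (gaussianPDFReal 0 v x)) • Real.exp (c * x)
      = Real.exp (c ^ 2 * v / 2) * gaussianPDFReal (c * v) v x := by
    intro x
    rw [NNReal.smul_def, Real.coe_toNNReal _ (gaussianPDFReal_nonneg 0 v x), smul_eq_mul,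
      gaussianPDFReal_mul_exp c x hv']
  constructor
  · rw [gaussianReal_of_var_ne_zero 0 hv, hpdf,
      integral_withDensity_eq_integral_smul hmeas]
    calc (∫ x, (Real.toNNReal (gaussianPDFReal 0 v x) : ℝ≥0) • Real.exp (c * x))
        = ∫ x, Real.exp (c ^ 2 * v / 2) * gaussianPDFReal (c * v) v x := by
          exact integral_congr_ae (Filter.Eventually.of_forall fun x => hkey x)
      _ = Real.exp (c ^ 2 * v / 2) * ∫ x, gaussianPDFReal (c * v) v x := by
          rw [integral_const_mul]
      _ = Real.exp (c ^ 2 * v / 2) := by rw [integral_gaussianPDFReal_eq_one _ hv, mul_one]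
  · rw [gaussianReal_of_var_ne_zero 0 hv, hpdf,
      integrable_withDensity_iff_integrable_smul hmeas]
    have heq : (fun x => (Real.toNNReal (gaussianPDFReal 0 v x) : ℝ≥0) • Real.exp (c * x))
        = fun x => Real.exp (c ^ 2 * v / 2) * gaussianPDFReal (c * v) v x := funext fun x => hkey x
    rw [heq]
    exact (integrable_gaussianPDFReal (c * v) v).const_mul _

/-- mgf of the noise variables. -/
lemma eps_exp_integral (M : Model Ω) (c : ℝ) (s : ℕ) :
    (∫ ω, Real.exp (c * M.eps s ω) ∂M.P) = Real.exp (c ^ 2 * M.σ ^ 2 / 2) ∧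
      Integrable (fun ω => Real.exp (c * M.eps s ω)) M.P := by
  have hv : (⟨M.σ ^ 2, sq_nonneg M.σ⟩ : ℝ≥0) ≠ 0 := by
    have := M.σ_pos
    intro h
    have h' : M.σ ^ 2 = 0 := congrArg Subtype.val h
    nlinarith
  have h1 := integral_exp_gaussianReal c hv
  have hmap := M.law_eps s
  have hme : AEMeasurable (M.eps s) M.P := (M.meas_eps s).aemeasurable
  have hcont : ∀ μ : Measure ℝ, AEStronglyMeasurable (fun x : ℝ => Real.exp (c * x)) μ :=
    fun μ => (Real.continuous_exp.comp (continuous_const.mul continuous_id)).aestronglyMeasurable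
  rw [← hmap, integral_map hme (hcont _)] at h1
  refine ⟨h1.1, ?_⟩
  exact (integrable_map_measure (hcont _) hme).1 h1.2

end Gaussian

section StopProc

variable {Ω : Type} [MeasurableSpace Ω]

open Classical
/-- The process `Z` stopped at the first time `k' ≥ 1` where `Bad k'` occurs. -/
noncomputable def stopProc (Z : ℕ → Ω → ℝ) (Bad : ℕ → Set Ω) : ℕ → Ω → ℝ
  | 0 => Z 0
  | k + 1 => fun ω =>
      if ∃ k' ∈ Finset.Icc 1 k, ω ∈ Bad k' then stopProc Z Bad k ω else Z (k + 1) ω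

lemma stopProc_succ (Z : ℕ → Ω → ℝ) (Bad : ℕ → Set Ω) (k : ℕ) (ω : Ω) :
    stopProc Z Bad (k + 1) ω =
      if ∃ k' ∈ Finset.Icc 1 k, ω ∈ Bad k' then stopProc Z Bad k ω
      else Z (k + 1) ω := by
  simp [stopProc]

lemma stopProc_eq_of_notStop (Z : ℕ → Ω → ℝ) (Bad : ℕ → Set Ω) (k : ℕ) (ω : Ω)
    (h : ¬ ∃ k' ∈ Finset.Icc 1 k, ω ∈ Bad k') : stopProc Z Bad k ω = Z k ω := by
  cases k with
  | zero => rfl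
  | succ k =>
    rw [stopProc_succ, if_neg]
    intro ⟨k', hk', hb⟩
    rw [Finset.mem_Icc] at hk'
    exact h ⟨k', by rw [Finset.mem_Icc]; omega, hb⟩

lemma stopProc_nonneg (Z : ℕ → Ω → ℝ) (Bad : ℕ → Set Ω) (hZ : ∀ k ω, 0 ≤ Z k ω) (k : ℕ)
    (ω : Ω) : 0 ≤ stopProc Z Bad k ω := by
  induction k with
  | zero => exact hZ 0 ω
  | succ k ih =>
    rw [stopProc_succ]
    split
    · exact ih
    · exact hZ _ ω

/-- If a bad event occurs at a minimal time `k₀ ∈ [1, n]`, then `stopProc Z Bad n = Z k₀`. -/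
lemma stopProc_eq_of_bad (Z : ℕ → Ω → ℝ) (Bad : ℕ → Set Ω) {n k₀ : ℕ} (ω : Ω)
    (hk1 : 1 ≤ k₀) (hkn : k₀ ≤ n) (hbad : ω ∈ Bad k₀)
    (hmin : ∀ k', 1 ≤ k' → k' < k₀ → ω ∉ Bad k') :
    stopProc Z Bad n ω = Z k₀ ω := by
  have base : stopProc Z Bad k₀ ω = Z k₀ ω := by
    obtain ⟨m, rfl⟩ : ∃ m, k₀ = m + 1 := ⟨k₀ - 1, by omega⟩
    rw [stopProc_succ, if_neg]
    rintro ⟨k', hk', hb⟩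
    rw [Finset.mem_Icc] at hk'
    exact hmin k' hk'.1 (by omega) hb
  have step : ∀ l, k₀ ≤ l → stopProc Z Bad l ω = Z k₀ ω := by
    intro l hl
    induction l, hl using Nat.le_induction with
    | base => exact base
    | succ l hl ih =>
      rw [stopProc_succ, if_pos ⟨k₀, by rw [Finset.mem_Icc]; omega, hbad⟩]
      exact ih
  exact step n hkn

end StopProc

section GaussTail

open Classical

variable {Ω : Type} [MeasurableSpace Ω]

lemma gauss_tail (M : Model Ω) {θ : ℝ} {π : ℕ → Ω → ℝ} (hπ : IsPolicy M θ π)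
    (n j : ℕ) (hj : 1 ≤ j) {c : ℝ} (hc : 0 ≤ c) :
    (M.P {ω | ∃ k ∈ Finset.Icc 1 n, Tpulls π k ω = (j : ℝ) ∧
        c * Real.sqrt j ≤ -(Mpart M π k ω)}).toReal ≤
      Real.exp (-(c ^ 2 / (2 * M.σ ^ 2))) := by
  haveI := M.isProb
  have hσ2 : (0 : ℝ) < M.σ ^ 2 := by have := M.σ_pos; positivity
  have hjpos : (0 : ℝ) < (j : ℝ) := by exact_mod_cast hj
  have hsj : 0 < Real.sqrt j := Real.sqrt_pos.2 hjpos
  have hj2 : Real.sqrt j * Real.sqrt j = (j : ℝ) := Real.mul_self_sqrt hjpos.le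
  set sj : ℝ := Real.sqrt j with hsjdef
  set lam : ℝ := c / (M.σ ^ 2 * sj) with hlam
  have hlam0 : 0 ≤ lam := div_nonneg hc (by positivity)
  set Z : ℕ → Ω → ℝ := fun k ω =>
    Real.exp (-(lam * Mpart M π k ω) - lam ^ 2 * M.σ ^ 2 * Tpulls π k ω / 2) with hZdef
  set Bad : ℕ → Set Ω := fun k =>
    {ω | Tpulls π k ω = (j : ℝ) ∧ c * sj ≤ -(Mpart M π k ω)} with hBaddef
  have hZpos : ∀ k ω, 0 < Z k ω := fun k ω => Real.exp_pos _
  have measZ : ∀ k, Measurable[HX M k] (Z k) := by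
    intro k
    have h1 := measurable_Mpart_HX (M := M) hπ k
    have h2 := measurable_Tpulls_HX (M := M) hπ k
    exact ((h1.const_mul lam).neg.sub ((h2.const_mul (lam ^ 2 * M.σ ^ 2)).div_const 2)).exp
  have measBad : ∀ k, MeasurableSet[HX M k] (Bad k) := by
    intro k
    have h1 := measurable_Mpart_HX (M := M) hπ k
    have h2 := measurable_Tpulls_HX (M := M) hπ k
    have : Bad k = (fun ω => Tpulls π k ω) ⁻¹' {(j : ℝ)} ∩
        (fun ω => Mpart M π k ω) ⁻¹' (Set.Iic (-(c * sj))) := by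
      ext ω
      simp only [hBaddef, Set.mem_setOf_eq, Set.mem_inter_iff, Set.mem_preimage,
        Set.mem_singleton_iff, Set.mem_Iic]
      constructor
      · rintro ⟨h, h'⟩; exact ⟨h, by linarith⟩
      · rintro ⟨h, h'⟩; exact ⟨h, by linarith⟩
    rw [this]
    exact (h2 (measurableSet_singleton _)).inter (h1 measurableSet_Iic)
  have measSS : ∀ k, MeasurableSet[HX M k] {ω | ∃ k' ∈ Finset.Icc 1 k, ω ∈ Bad k'} := by
    intro k
    have : {ω | ∃ k' ∈ Finset.Icc 1 k, ω ∈ Bad k'} = ⋃ k' ∈ Finset.Icc 1 k, Bad k' := by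
      ext ω; simp
    rw [this]
    refine Finset.measurableSet_biUnion _ fun k' hk' => ?_
    rw [Finset.mem_Icc] at hk'
    exact (HX_mono M hk'.2) _ (measBad k')
  -- the one-step integral computation
  have hstep : ∀ (k : ℕ) (g : Ω → ℝ), Measurable[HX M k] g → (∀ ω, |g ω| ≤ Z k ω) →
      Integrable (Z k) M.P →
      Integrable (fun ω => g ω * (Real.exp (-(lam ^ 2 * M.σ ^ 2) / 2) *
        Real.exp (-lam * M.eps (k + 1) ω) - 1)) M.P ∧
      (∫ ω, g ω * (Real.exp (-(lam ^ 2 * M.σ ^ 2) / 2) *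
        Real.exp (-lam * M.eps (k + 1) ω) - 1) ∂M.P) = 0 := by
    intro k g hg hb hZint
    set V : Ω → ℝ := fun ω => Real.exp (-lam * M.eps (k + 1) ω) with hVdef
    set A : ℝ := Real.exp (-(lam ^ 2 * M.σ ^ 2) / 2) with hAdef
    have hgm : Measurable g := hg.mono (HX_le M k) le_rfl
    have hVint : Integrable V M.P := (eps_exp_integral M (-lam) (k + 1)).2
    have hVval : ∫ ω, V ω ∂M.P = Real.exp (lam ^ 2 * M.σ ^ 2 / 2) := by
      have h := (eps_exp_integral M (-lam) (k + 1)).1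
      have h' : (-lam) ^ 2 * M.σ ^ 2 / 2 = lam ^ 2 * M.σ ^ 2 / 2 := by ring
      rw [h'] at h
      exact h
    have hgint : Integrable g M.P :=
      Integrable.mono' hZint hgm.aestronglyMeasurable (ae_of_all _ hb)
    have hIndep : IndepFun g V M.P := by
      rw [IndepFun_iff_Indep]
      have hV' : Measurable[MeasurableSpace.comap (M.eps (k + 1)) inferInstance] V := by
        have h0 : Measurable[MeasurableSpace.comap (M.eps (k + 1)) inferInstance]
            (M.eps (k + 1)) := Measurable.of_comap_le le_rfl
        exact ((measurable_id.const_mul (-lam)).exp).comp h0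
      exact indep_of_indep_of_le_left
        (indep_of_indep_of_le_right (indep_eps_HX M k) (measurable_iff_comap_le.1 hV'))
        (measurable_iff_comap_le.1 hg)
    have hgVint : Integrable (fun ω => g ω * V ω) M.P := by
      have := hIndep.integrable_mul hgint hVint
      exact this
    have hgVval : (∫ ω, g ω * V ω ∂M.P) = (∫ ω, g ω ∂M.P) * ∫ ω, V ω ∂M.P := by
      have := hIndep.integral_fun_mul_eq_mul_integral hgint.1 hVint.1
      exact this
    have hfun : (fun ω => g ω * (A * V ω - 1)) = fun ω => A * (g ω * V ω) - g ω := by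
      funext ω; ring
    constructor
    · rw [hfun]
      exact (hgVint.const_mul A).sub hgint
    · rw [hfun, integral_sub (hgVint.const_mul A) hgint, integral_const_mul, hgVval, hVval]
      have hA1 : A * Real.exp (lam ^ 2 * M.σ ^ 2 / 2) = 1 := by
        rw [hAdef, ← Real.exp_add,
          show -(lam ^ 2 * M.σ ^ 2) / 2 + lam ^ 2 * M.σ ^ 2 / 2 = 0 by ring]
        exact Real.exp_zero
      rw [← mul_assoc, mul_comm A, mul_assoc, hA1, mul_one, sub_self]
  -- one-step pointwise identity for Z
  have idZ : ∀ k ω, Z (k + 1) ω = Z k ω + (π (k + 1) ω * Z k ω) *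
      (Real.exp (-(lam ^ 2 * M.σ ^ 2) / 2) * Real.exp (-lam * M.eps (k + 1) ω) - 1) := by
    intro k ω
    rcases hπ.vals (k + 1) ω with h | h
    · rw [hZdef]
      simp only [Tpulls_succ, Mpart_succ, h, mul_zero, add_zero, zero_mul]
    · rw [hZdef]
      simp only [Tpulls_succ, Mpart_succ, h, mul_one, one_mul]
      have harg : -(lam * (Mpart M π k ω + M.eps (k + 1) ω)) -
          lam ^ 2 * M.σ ^ 2 * (Tpulls π k ω + 1) / 2 =
          (-(lam * Mpart M π k ω) - lam ^ 2 * M.σ ^ 2 * Tpulls π k ω / 2) +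
          (-(lam ^ 2 * M.σ ^ 2) / 2 + -lam * M.eps (k + 1) ω) := by ring
      rw [harg, Real.exp_add, Real.exp_add]
      ring
  -- main induction: integrability of Z and the stopped process has mean one
  have main : ∀ k, Integrable (Z k) M.P ∧ Integrable (stopProc Z Bad k) M.P ∧
      (∫ ω, stopProc Z Bad k ω ∂M.P) = 1 := by
    intro k
    induction k with
    | zero =>
      have hZ0 : Z 0 = fun _ => (1 : ℝ) := by
        funext ω
        rw [hZdef]
        simp [Tpulls, Mpart, Finset.Icc_eq_empty (by omega : ¬ (1 : ℕ) ≤ 0)]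
      refine ⟨by rw [hZ0]; exact integrable_const 1, ?_, ?_⟩
      · show Integrable (Z 0) M.P
        rw [hZ0]; exact integrable_const 1
      · show (∫ ω, Z 0 ω ∂M.P) = 1
        rw [hZ0]; simp
    | succ k ih =>
      obtain ⟨hZk, hWk, hWval⟩ := ih
      have hπmeas : Measurable[HX M k] (π (k + 1)) := by
        have := measurable_pi_HX (M := M) (θ := θ) hπ (k + 1) (by omega)
        simpa using this
      have hgmeas : Measurable[HX M k] (fun ω => π (k + 1) ω * Z k ω) :=
        hπmeas.mul (measZ k)
      have hgbound : ∀ ω, |π (k + 1) ω * Z k ω| ≤ Z k ω := by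
        intro ω
        rw [abs_of_nonneg (mul_nonneg (pi_nonneg hπ _ ω) (hZpos k ω).le)]
        calc π (k + 1) ω * Z k ω ≤ 1 * Z k ω :=
              mul_le_mul_of_nonneg_right (pi_le_one hπ _ ω) (hZpos k ω).le
          _ = Z k ω := one_mul _
      have hZsucc : Integrable (Z (k + 1)) M.P := by
        have hfun : Z (k + 1) = fun ω => Z k ω + (π (k + 1) ω * Z k ω) *
            (Real.exp (-(lam ^ 2 * M.σ ^ 2) / 2) * Real.exp (-lam * M.eps (k + 1) ω) - 1) :=
          funext (idZ k)
        rw [hfun]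
        exact hZk.add (hstep k _ hgmeas hgbound hZk).1
      -- stopped process step
      set Ik : Ω → ℝ := fun ω => if ∃ k' ∈ Finset.Icc 1 k, ω ∈ Bad k' then 0 else 1 with hIk
      have hIkmeas : Measurable[HX M k] Ik :=
        Measurable.ite (measSS k) measurable_const measurable_const
      have hIkvals : ∀ ω, Ik ω = 0 ∨ Ik ω = 1 := by
        intro ω
        by_cases hss : ∃ k' ∈ Finset.Icc 1 k, ω ∈ Bad k'
        · left; simp only [hIk, if_pos hss]
        · right; simp only [hIk, if_neg hss]
      have hg'meas : Measurable[HX M k] (fun ω => Ik ω * (π (k + 1) ω * Z k ω)) :=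
        hIkmeas.mul hgmeas
      have hg'bound : ∀ ω, |Ik ω * (π (k + 1) ω * Z k ω)| ≤ Z k ω := by
        intro ω
        rw [abs_mul]
        rcases hIkvals ω with h | h
        · rw [h]
          simp [(hZpos k ω).le]
        · rw [h]
          simp only [abs_one, one_mul]
          exact hgbound ω
      have idW : ∀ ω, stopProc Z Bad (k + 1) ω = stopProc Z Bad k ω +
          (Ik ω * (π (k + 1) ω * Z k ω)) *
          (Real.exp (-(lam ^ 2 * M.σ ^ 2) / 2) * Real.exp (-lam * M.eps (k + 1) ω) - 1) := by
        intro ω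
        rw [stopProc_succ]
        by_cases hss : ∃ k' ∈ Finset.Icc 1 k, ω ∈ Bad k'
        · rw [if_pos hss]
          simp only [hIk, if_pos hss]
          ring
        · rw [if_neg hss, stopProc_eq_of_notStop Z Bad k ω hss]
          simp only [hIk, if_neg hss, one_mul]
          exact idZ k ω
      have hWfun : stopProc Z Bad (k + 1) = fun ω => stopProc Z Bad k ω +
          (Ik ω * (π (k + 1) ω * Z k ω)) *
          (Real.exp (-(lam ^ 2 * M.σ ^ 2) / 2) * Real.exp (-lam * M.eps (k + 1) ω) - 1) :=
        funext idW
      refine ⟨hZsucc, ?_, ?_⟩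
      · rw [hWfun]
        exact hWk.add (hstep k _ hg'meas hg'bound hZk).1
      · rw [hWfun, integral_add hWk (hstep k _ hg'meas hg'bound hZk).1, hWval,
          (hstep k _ hg'meas hg'bound hZk).2, add_zero]
  -- conclusion
  set a : ℝ := Real.exp (c ^ 2 / (2 * M.σ ^ 2)) with hadef
  have hapos : 0 < a := Real.exp_pos _
  have hseteq : {ω | ∃ k ∈ Finset.Icc 1 n, Tpulls π k ω = (j : ℝ) ∧
      c * sj ≤ -(Mpart M π k ω)} = ⋃ k ∈ Finset.Icc 1 n, Bad k := by
    ext ω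
    simp only [hBaddef, Set.mem_setOf_eq, Set.mem_iUnion₂, Finset.mem_Icc]
    tauto
  rw [hseteq]
  have hAmeas : MeasurableSet (⋃ k ∈ Finset.Icc 1 n, Bad k) := by
    refine Finset.measurableSet_biUnion _ fun k' _ => ?_
    exact (HX_le M k') _ (measBad k')
  have hWn_ge : ∀ ω ∈ ⋃ k ∈ Finset.Icc 1 n, Bad k, a ≤ stopProc Z Bad n ω := by
    intro ω hω
    rw [Set.mem_iUnion₂] at hω
    obtain ⟨kw, hkw, hbadw⟩ := hω
    rw [Finset.mem_Icc] at hkw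
    have hex : ∃ k, 1 ≤ k ∧ ω ∈ Bad k := ⟨kw, hkw.1, hbadw⟩
    set k₀ := Nat.find hex with hk₀def
    obtain ⟨hk₀1, hk₀bad⟩ := Nat.find_spec hex
    have hk₀le : k₀ ≤ kw := Nat.find_min' hex ⟨hkw.1, hbadw⟩
    have hmin : ∀ k', 1 ≤ k' → k' < k₀ → ω ∉ Bad k' := by
      intro k' h1 h2 hbad'
      exact Nat.find_min hex h2 ⟨h1, hbad'⟩
    rw [stopProc_eq_of_bad Z Bad ω hk₀1 (by omega) hk₀bad hmin]
    obtain ⟨hT, hM⟩ := hk₀bad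
    rw [hZdef]
    simp only
    rw [hT]
    have harg : c ^ 2 / (2 * M.σ ^ 2) ≤ -(lam * Mpart M π k₀ ω) -
        lam ^ 2 * M.σ ^ 2 * (j : ℝ) / 2 := by
      have h1 : lam * (c * sj) ≤ lam * (-(Mpart M π k₀ ω)) :=
        mul_le_mul_of_nonneg_left hM hlam0
      have h2 : lam * (c * sj) - lam ^ 2 * M.σ ^ 2 * (j : ℝ) / 2 =
          c ^ 2 / (2 * M.σ ^ 2) := by
        rw [hlam, ← hj2]
        field_simp
        ring
      nlinarith [h1, h2]
    calc a = Real.exp (c ^ 2 / (2 * M.σ ^ 2)) := rfl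
      _ ≤ _ := Real.exp_le_exp.2 harg
  have hfinal : a * (M.P (⋃ k ∈ Finset.Icc 1 n, Bad k)).toReal ≤ 1 := by
    have hind : Integrable ((⋃ k ∈ Finset.Icc 1 n, Bad k).indicator (fun _ => a)) M.P :=
      (integrable_const a).indicator hAmeas
    have hle : (⋃ k ∈ Finset.Icc 1 n, Bad k).indicator (fun _ => a) ≤ stopProc Z Bad n := by
      intro ω
      by_cases hω : ω ∈ ⋃ k ∈ Finset.Icc 1 n, Bad k
      · rw [Set.indicator_of_mem hω]
        exact hWn_ge ω hω
      · rw [Set.indicator_of_notMem hω]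
        exact stopProc_nonneg Z Bad (fun k ω => (hZpos k ω).le) n ω
    have h1 := integral_mono hind (main n).2.1 hle
    rw [integral_indicator_const _ hAmeas, smul_eq_mul, (main n).2.2, measureReal_def] at h1
    linarith [h1]
  have htoReal : (M.P (⋃ k ∈ Finset.Icc 1 n, Bad k)).toReal ≤ a⁻¹ := by
    have h0 : (0:ℝ) ≤ (M.P (⋃ k ∈ Finset.Icc 1 n, Bad k)).toReal := ENNReal.toReal_nonneg
    calc (M.P (⋃ k ∈ Finset.Icc 1 n, Bad k)).toReal
        = a⁻¹ * (a * (M.P (⋃ k ∈ Finset.Icc 1 n, Bad k)).toReal) := by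
          field_simp
      _ ≤ a⁻¹ * 1 := by
          exact mul_le_mul_of_nonneg_left hfinal (by positivity)
      _ = a⁻¹ := mul_one _
  calc (M.P (⋃ k ∈ Finset.Icc 1 n, Bad k)).toReal ≤ a⁻¹ := htoReal
    _ = Real.exp (-(c ^ 2 / (2 * M.σ ^ 2))) := by rw [hadef, ← Real.exp_neg]

end GaussTail

section BernTail

variable {Ω : Type} [MeasurableSpace Ω]

/-- The indicator that the covariate exceeds `θ`. -/
def bX (M : Model Ω) (θ : ℝ) (s : ℕ) (ω : Ω) : ℝ := if θ ≤ M.X s ω then 1 else 0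

lemma bX_nonneg (M : Model Ω) (θ : ℝ) (s : ℕ) (ω : Ω) : 0 ≤ bX M θ s ω := by
  rw [bX]; split <;> norm_num

lemma measurable_bX_Hgen (M : Model Ω) (θ : ℝ) {S : Set (ℕ ⊕ ℕ)} {s : ℕ}
    (hs : Sum.inl s ∈ S) : Measurable[Hgen M S] (bX M θ s) := by
  have h : Measurable (fun x : ℝ => if θ ≤ x then (1:ℝ) else 0) :=
    Measurable.ite measurableSet_Ici measurable_const measurable_const
  exact h.comp (measurable_fam_Hgen M (i := Sum.inl s) hs)

lemma measurable_bX (M : Model Ω) (θ : ℝ) (s : ℕ) : Measurable (bX M θ s) :=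
  (measurable_bX_Hgen M θ (S := Set.univ) trivial).mono (Hgen_le M _) le_rfl

lemma integral_exp_neg_bX (M : Model Ω) (θ : ℝ) (s : ℕ) :
    (∫ ω, Real.exp (-(bX M θ s ω)) ∂M.P) =
      1 - (1 - Real.exp (-1)) * (M.PX (Set.Ici θ)).toReal := by
  haveI := M.isProb
  haveI := M.PX_prob
  have hme : AEMeasurable (M.X s) M.P := (M.meas_X s).aemeasurable
  have hf : Measurable (fun x : ℝ => Real.exp (-(if θ ≤ x then (1:ℝ) else 0))) :=
    (Measurable.ite measurableSet_Ici measurable_const measurable_const).neg.exp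
  have h1 : (∫ ω, Real.exp (-(bX M θ s ω)) ∂M.P) =
      ∫ x, Real.exp (-(if θ ≤ x then (1:ℝ) else 0)) ∂M.PX := by
    rw [← M.law_X s, integral_map hme hf.aestronglyMeasurable]
    rfl
  rw [h1]
  have h2 : (fun x : ℝ => Real.exp (-(if θ ≤ x then (1:ℝ) else 0))) =
      fun x => (Set.Ici θ).indicator (fun _ => Real.exp (-1) - 1) x + 1 := by
    funext x
    by_cases hx : θ ≤ x
    · rw [if_pos hx, Set.indicator_of_mem (show x ∈ Set.Ici θ from hx)]
      ring
    · rw [if_neg hx, Set.indicator_of_notMem (show x ∉ Set.Ici θ from hx)]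
      simp
  rw [h2, integral_add ((integrable_const _).indicator measurableSet_Ici) (integrable_const 1),
    integral_indicator_const _ measurableSet_Ici, integral_const]
  simp only [smul_eq_mul, measureReal_def, measure_univ, ENNReal.toReal_one, one_mul]
  ring

lemma bern_tail (M : Model Ω) (θ : ℝ) (m t : ℕ) (hmt : m ≤ t) (c : ℝ) :
    (M.P {ω | (∑ s ∈ Finset.Icc (m + 1) t, bX M θ s ω) ≤ c}).toReal ≤
      Real.exp c * Real.exp (-((M.PX (Set.Ici θ)).toReal * (1 - Real.exp (-1)) * ((t - m : ℕ) : ℝ))) := by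
  haveI := M.isProb
  haveI := M.PX_prob
  set q : ℝ := (M.PX (Set.Ici θ)).toReal with hq
  have hq0 : 0 ≤ q := ENNReal.toReal_nonneg
  have hq1 : q ≤ 1 := by
    rw [hq]
    exact ENNReal.toReal_le_of_le_ofReal one_pos.le (by simpa using prob_le_one)
  have he1 : 0 < Real.exp (-1) := Real.exp_pos _
  have he2 : Real.exp (-1) < 1 := by
    rw [Real.exp_lt_one_iff]
    norm_num
  set N : ℕ → Ω → ℝ := fun k ω => ∑ s ∈ Finset.Icc (m + 1) k, bX M θ s ω with hN
  have measN : ∀ k, Measurable (N k) := fun k =>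
    Finset.measurable_sum _ fun s _ => measurable_bX M θ s
  have hNnonneg : ∀ k ω, 0 ≤ N k ω := fun k ω =>
    Finset.sum_nonneg fun s _ => bX_nonneg M θ s ω
  have hexpb : ∀ k ω, Real.exp (-(N k ω)) ≤ 1 := fun k ω => by
    rw [Real.exp_le_one_iff]
    simp [hNnonneg k ω]
  have hint : ∀ k, Integrable (fun ω => Real.exp (-(N k ω))) M.P := by
    intro k
    refine Integrable.mono' (integrable_const 1) ((measN k).neg.exp).aestronglyMeasurable
      (ae_of_all _ fun ω => ?_)
    rw [Real.norm_eq_abs, abs_of_pos (Real.exp_pos _)]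
    exact hexpb k ω
  have key : ∀ k, m ≤ k → (∫ ω, Real.exp (-(N k ω)) ∂M.P) ≤
      Real.exp (-(q * (1 - Real.exp (-1)) * ((k - m : ℕ) : ℝ))) := by
    intro k hk
    induction k, hk using Nat.le_induction with
    | base =>
      have : N m = fun _ => 0 := by
        funext ω
        rw [hN]
        simp only
        rw [Finset.Icc_eq_empty (by omega), Finset.sum_empty]
      rw [this]
      simp
    | succ k hk ih =>
      have hstep : N (k + 1) = fun ω => N k ω + bX M θ (k + 1) ω := by
        funext ω
        rw [hN]
        simp only
        rw [← Finset.sum_Icc_succ_top (by omega)]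
      have hsplit : (fun ω => Real.exp (-(N (k + 1) ω))) =
          fun ω => Real.exp (-(N k ω)) * Real.exp (-(bX M θ (k + 1) ω)) := by
        funext ω
        rw [hstep, ← Real.exp_add]
        ring_nf
      -- independence
      have hIndep : IndepFun (fun ω => Real.exp (-(N k ω)))
          (fun ω => Real.exp (-(bX M θ (k + 1) ω))) M.P := by
        rw [IndepFun_iff_Indep]
        have hNm : Measurable[Hgen M (Sum.inl '' Set.Iic k)] (fun ω => Real.exp (-(N k ω))) := by
          refine Measurable.exp (Measurable.neg ?_)
          refine Finset.measurable_sum _ fun s hs => ?_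
          rw [Finset.mem_Icc] at hs
          exact measurable_bX_Hgen M θ ⟨s, by simp [Set.mem_Iic]; omega, rfl⟩
        have hbm : Measurable[Hgen M {Sum.inl (k + 1)}]
            (fun ω => Real.exp (-(bX M θ (k + 1) ω))) :=
          Measurable.exp (Measurable.neg (measurable_bX_Hgen M θ rfl))
        refine indep_of_indep_of_le_left (indep_of_indep_of_le_right
          (indep_Hgen M ?_) (measurable_iff_comap_le.1 hbm)) (measurable_iff_comap_le.1 hNm)
        rw [Set.disjoint_singleton_right]
        rintro ⟨s, hs, hs'⟩
        rw [Set.mem_Iic] at hs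
        cases Sum.inl.inj hs'
        omega
      have hintb : Integrable (fun ω => Real.exp (-(bX M θ (k + 1) ω))) M.P := by
        refine Integrable.mono' (integrable_const 1)
          ((measurable_bX M θ (k + 1)).neg.exp).aestronglyMeasurable (ae_of_all _ fun ω => ?_)
        rw [Real.norm_eq_abs, abs_of_pos (Real.exp_pos _)]
        rw [Real.exp_le_one_iff]
        simp [bX_nonneg M θ (k + 1) ω]
      have hmul : (∫ ω, Real.exp (-(N k ω)) * Real.exp (-(bX M θ (k + 1) ω)) ∂M.P) =
          (∫ ω, Real.exp (-(N k ω)) ∂M.P) * ∫ ω, Real.exp (-(bX M θ (k + 1) ω)) ∂M.P := by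
        have := hIndep.integral_fun_mul_eq_mul_integral (hint k).1 hintb.1
        exact this
      rw [hsplit]
      have hval := integral_exp_neg_bX M θ (k + 1)
      rw [hmul, hval, ← hq]
      have hb1 : 1 - (1 - Real.exp (-1)) * q ≤ Real.exp (-(q * (1 - Real.exp (-1)))) := by
        have := Real.add_one_le_exp (-(q * (1 - Real.exp (-1))))
        linarith
      have hb0 : 0 ≤ 1 - (1 - Real.exp (-1)) * q := by nlinarith
      have hpos : 0 ≤ ∫ ω, Real.exp (-(N k ω)) ∂M.P :=
        integral_nonneg fun ω => (Real.exp_pos _).le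
      calc (∫ ω, Real.exp (-(N k ω)) ∂M.P) * (1 - (1 - Real.exp (-1)) * q)
          ≤ Real.exp (-(q * (1 - Real.exp (-1)) * ((k - m : ℕ) : ℝ))) *
            Real.exp (-(q * (1 - Real.exp (-1)))) := by
            exact mul_le_mul ih hb1 hb0 (Real.exp_pos _).le
        _ = Real.exp (-(q * (1 - Real.exp (-1)) * (((k + 1) - m : ℕ) : ℝ))) := by
            rw [← Real.exp_add]
            congr 1
            have hc : ((k + 1) - m : ℕ) = (k - m : ℕ) + 1 := by omega
            rw [hc]
            push_cast
            ring
  -- Markov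
  have hset : MeasurableSet {ω | N t ω ≤ c} := measurableSet_le (measN t) measurable_const
  have hge : ∀ ω ∈ {ω | N t ω ≤ c}, Real.exp (-c) ≤ Real.exp (-(N t ω)) := by
    intro ω hω
    exact Real.exp_le_exp.2 (by simpa using hω)
  have hmarkov : Real.exp (-c) * (M.P {ω | N t ω ≤ c}).toReal ≤
      ∫ ω, Real.exp (-(N t ω)) ∂M.P := by
    have hind : Integrable ({ω | N t ω ≤ c}.indicator (fun _ => Real.exp (-c))) M.P :=
      (integrable_const _).indicator hset
    have hle : {ω | N t ω ≤ c}.indicator (fun _ => Real.exp (-c)) ≤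
        fun ω => Real.exp (-(N t ω)) := by
      intro ω
      by_cases hω : ω ∈ {ω | N t ω ≤ c}
      · rw [Set.indicator_of_mem hω]
        exact hge ω hω
      · rw [Set.indicator_of_notMem hω]
        exact (Real.exp_pos _).le
    have h1 := integral_mono hind (hint t) hle
    rw [integral_indicator_const _ hset, smul_eq_mul, mul_comm, measureReal_def] at h1
    linarith [h1]
  have hfin := le_trans hmarkov (key t hmt)
  calc (M.P {ω | N t ω ≤ c}).toReal
      = Real.exp c * (Real.exp (-c) * (M.P {ω | N t ω ≤ c}).toReal) := by
        rw [← mul_assoc, ← Real.exp_add]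
        simp
    _ ≤ Real.exp c * Real.exp (-(q * (1 - Real.exp (-1)) * ((t - m : ℕ) : ℝ))) :=
        mul_le_mul_of_nonneg_left hfin (Real.exp_pos c).le

end BernTail

section Assembly

variable {Ω : Type} [MeasurableSpace Ω]

lemma thetaHat_eq (M : Model Ω) (θ : ℝ) (π : ℕ → Ω → ℝ) (k : ℕ) (ω : Ω)
    (hT : Tpulls π k ω ≠ 0) :
    thetaHat M θ π k ω = θ - Mpart M π k ω / Tpulls π k ω := by
  rw [thetaHat]
  have h1 : ∀ s ∈ Finset.Icc 1 k, (M.X s ω - M.Y θ s ω) * π s ω =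
      θ * π s ω - M.eps s ω * π s ω := by
    intro s _
    rw [Model.Y]
    ring
  rw [Finset.sum_congr rfl h1, Finset.sum_sub_distrib, ← Finset.mul_sum]
  have h2 : (∑ s ∈ Finset.Icc 1 k, π s ω) = Tpulls π k ω := rfl
  have h3 : (∑ s ∈ Finset.Icc 1 k, M.eps s ω * π s ω) = Mpart M π k ω := rfl
  rw [h2, h3]
  field_simp

lemma bX_le_one (M : Model Ω) (θ : ℝ) (s : ℕ) (ω : Ω) : bX M θ s ω ≤ 1 := by
  rw [bX]; split <;> norm_num

end Assembly

set_option maxHeartbeats 1000000 in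
/-- Lemma 2: if `p ≤ P_X([θ,∞)) < 1` and `(δ_t)` is a nondecreasing sequence of
positive reals, then for the nearly-myopic policy `π̂` associated with `δ`, for any
`z ∈ (0, 1/4]` and any `t ≥ 2`,
`P(T_π̂(t) ≤ zpt) ≤ exp(−p²z²t/2) + 4zt exp(−δ²_{⌊(1−2z)t⌋}/(4σ²))`. -/
theorem lemma2_pulls_lower (Ω : Type) [MeasurableSpace Ω] (M : Model Ω) (θ p : ℝ)
    (hp : p ∈ Set.Ioo (0 : ℝ) 1)
    (hp_le : p ≤ (M.PX (Set.Ici θ)).toReal)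
    (δ : ℕ → ℝ) (hδpos : ∀ t, 0 < δ t) (hδmono : Monotone δ)
    (π : ℕ → Ω → ℝ) (hπ : IsPolicy M θ π) (hnm : IsNearlyMyopic M θ δ π)
    (z : ℝ) (hz : z ∈ Set.Ioc (0 : ℝ) (1 / 4)) (t : ℕ) (ht : 2 ≤ t) :
    (M.P {ω | Tpulls π t ω ≤ z * p * t}).toReal ≤
      Real.exp (-(p ^ 2 * z ^ 2 * t) / 2) +
        4 * z * t *
          Real.exp (-(δ ⌊(1 - 2 * z) * (t : ℝ)⌋₊) ^ 2 / (4 * M.σ ^ 2)) := by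
  haveI := M.isProb
  obtain ⟨hp0, hp1⟩ := hp
  obtain ⟨hz0, hz4⟩ := hz
  have hσ2 : (0:ℝ) < M.σ ^ 2 := by have := M.σ_pos; positivity
  have ht0 : (2:ℝ) ≤ (t:ℝ) := by exact_mod_cast ht
  set m : ℕ := ⌊(1 - 2 * z) * (t : ℝ)⌋₊ with hmdef
  set q : ℝ := (M.PX (Set.Ici θ)).toReal with hqdef
  have h2z : (0:ℝ) ≤ 1 - 2 * z := by linarith
  have hm_le : (m:ℝ) ≤ (1 - 2*z) * t := Nat.floor_le (by positivity)
  have hm1 : 1 ≤ m := by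
    rw [hmdef]
    apply Nat.le_floor
    push_cast
    nlinarith
  have hmt : m < t := by
    have h : (m:ℝ) < (t:ℝ) := by nlinarith
    exact_mod_cast h
  have htm : 2*z*(t:ℝ) ≤ ((t - m : ℕ):ℝ) := by
    rw [Nat.cast_sub hmt.le]
    nlinarith
  set J : ℕ := ⌊z * p * (t:ℝ)⌋₊ with hJdef
  set B : Set Ω := {ω | (∑ s ∈ Finset.Icc (m + 1) t, bX M θ s ω) ≤ z * p * t} with hBdef
  set A : ℕ → Set Ω := fun j => {ω | ∃ k ∈ Finset.Icc 1 (t-1), Tpulls π k ω = (j:ℝ) ∧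
      δ m * Real.sqrt j ≤ -(Mpart M π k ω)} with hAdef
  -- the event inclusion
  have hsub : {ω | Tpulls π t ω ≤ z * p * t} ⊆ B ∪ ⋃ j ∈ Finset.Icc 1 J, A j := by
    intro ω hE
    rw [Set.mem_setOf_eq] at hE
    by_cases hB : ω ∈ B
    · exact Or.inl hB
    right
    rw [hBdef, Set.mem_setOf_eq, not_le] at hB
    have hsum : (∑ s ∈ Finset.Icc (m+1) t, π s ω) ≤ z * p * t := by
      refine le_trans ?_ hE
      exact Finset.sum_le_sum_of_subset_of_nonneg (Finset.Icc_subset_Icc (by omega) le_rfl)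
        (fun s _ _ => pi_nonneg hπ s ω)
    have hex : ∃ s ∈ Finset.Icc (m+1) t, π s ω < bX M θ s ω := by
      by_contra hcon
      push_neg at hcon
      have h := Finset.sum_le_sum hcon
      linarith
    obtain ⟨s, hs, hlt⟩ := hex
    rw [Finset.mem_Icc] at hs
    have hπ0 : π s ω = 0 := by
      rcases hπ.vals s ω with h | h
      · exact h
      · exfalso
        have h2 := bX_le_one M θ s ω
        rw [h] at hlt
        linarith
    have hbX1 : θ ≤ M.X s ω := by
      by_contra hcon
      rw [bX, if_neg hcon] at hlt
      linarith [pi_nonneg hπ s ω]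
    obtain ⟨k, rfl⟩ : ∃ k, s = k + 1 := ⟨s - 1, by omega⟩
    have hk1 : 1 ≤ k := by omega
    have hkm : m ≤ k := by omega
    have hkt : k ≤ t - 1 := by omega
    have hstep := hnm.step k ω hk1
    rw [hπ0] at hstep
    have hrej : M.X (k+1) ω < thetaHat M θ π k ω - δ k / Real.sqrt (Tpulls π k ω) := by
      by_contra hcon
      push_neg at hcon
      rw [if_pos hcon] at hstep
      norm_num at hstep
    have hT1 : 1 ≤ Tpulls π k ω := one_le_Tpulls hπ hnm hk1 ω
    have hT0 : (0:ℝ) < Tpulls π k ω := by linarith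
    have hsT : 0 < Real.sqrt (Tpulls π k ω) := Real.sqrt_pos.2 hT0
    obtain ⟨j, hj⟩ := Tpulls_nat hπ k ω
    have hj1 : 1 ≤ j := by
      have : (1:ℝ) ≤ (j:ℝ) := by rw [← hj]; exact hT1
      exact_mod_cast this
    have hjJ : j ≤ J := by
      rw [hJdef]
      apply Nat.le_floor
      rw [← hj]
      calc Tpulls π k ω ≤ Tpulls π t ω := Tpulls_mono hπ (by omega) ω
        _ ≤ z * p * t := hE
    have hth := thetaHat_eq M θ π k ω (by linarith)
    have hkey : Mpart M π k ω / Tpulls π k ω + δ k / Real.sqrt (Tpulls π k ω) < 0 := by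
      rw [hth] at hrej
      linarith
    have hTsq : Real.sqrt (Tpulls π k ω) * Real.sqrt (Tpulls π k ω) = Tpulls π k ω :=
      Real.mul_self_sqrt hT0.le
    have hkey2 : δ k * Real.sqrt (Tpulls π k ω) < -(Mpart M π k ω) := by
      have h1 : (Mpart M π k ω / Tpulls π k ω + δ k / Real.sqrt (Tpulls π k ω)) *
          Tpulls π k ω < 0 := mul_neg_of_neg_of_pos hkey hT0
      have h2 : (Mpart M π k ω / Tpulls π k ω) * Tpulls π k ω = Mpart M π k ω :=
        div_mul_cancel₀ _ (ne_of_gt hT0)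
      have h3 : (δ k / Real.sqrt (Tpulls π k ω)) * Tpulls π k ω =
          δ k * Real.sqrt (Tpulls π k ω) := by
        rw [div_mul_eq_mul_div, div_eq_iff hsT.ne', mul_assoc, hTsq]
      nlinarith [h1, h2, h3]
    have hfin : δ m * Real.sqrt j ≤ -(Mpart M π k ω) := by
      have h1 : δ m * Real.sqrt (Tpulls π k ω) ≤ δ k * Real.sqrt (Tpulls π k ω) :=
        mul_le_mul_of_nonneg_right (hδmono hkm) (Real.sqrt_nonneg _)
      rw [hj] at h1 hkey2
      linarith
    refine Set.mem_iUnion₂.2 ⟨j, Finset.mem_Icc.2 ⟨hj1, hjJ⟩, ?_⟩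
    rw [hAdef]
    exact ⟨k, Finset.mem_Icc.2 ⟨hk1, hkt⟩, hj, hfin⟩
  -- measure decomposition
  have hmeas_decomp : (M.P {ω | Tpulls π t ω ≤ z * p * t}).toReal ≤
      (M.P B).toReal + ∑ j ∈ Finset.Icc 1 J, (M.P (A j)).toReal := by
    have h1 : M.P {ω | Tpulls π t ω ≤ z * p * t} ≤
        M.P B + ∑ j ∈ Finset.Icc 1 J, M.P (A j) := by
      refine le_trans (measure_mono hsub) ?_
      refine le_trans (measure_union_le _ _) ?_
      exact add_le_add le_rfl (measure_biUnion_finset_le _ _)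
    have hsum_ne : (∑ j ∈ Finset.Icc 1 J, M.P (A j)) ≠ ⊤ := by
      refine ne_of_lt ?_
      refine ENNReal.sum_lt_top.2 fun j _ => measure_lt_top _ _
    have hne : (M.P B + ∑ j ∈ Finset.Icc 1 J, M.P (A j)) ≠ ⊤ :=
      ENNReal.add_ne_top.2 ⟨measure_ne_top _ _, hsum_ne⟩
    calc (M.P {ω | Tpulls π t ω ≤ z * p * t}).toReal
        ≤ (M.P B + ∑ j ∈ Finset.Icc 1 J, M.P (A j)).toReal := ENNReal.toReal_mono hne h1
      _ = (M.P B).toReal + ∑ j ∈ Finset.Icc 1 J, (M.P (A j)).toReal := by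
          rw [ENNReal.toReal_add (measure_ne_top _ _) hsum_ne,
            ENNReal.toReal_sum (fun j _ => measure_ne_top _ _)]
  -- bound for B
  have hPB : (M.P B).toReal ≤ Real.exp (-(p ^ 2 * z ^ 2 * t) / 2) := by
    have h1 := bern_tail M θ m t hmt.le (z * p * t)
    rw [← hqdef] at h1
    refine le_trans h1 ?_
    rw [← Real.exp_add]
    apply Real.exp_le_exp.2
    have hexp1 : (16:ℝ)/7 ≤ Real.exp 1 := by
      have h := Real.exp_one_gt_d9
      norm_num at h ⊢
      linarith
    have he : Real.exp (-1) ≤ 7/16 := by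
      rw [Real.exp_neg]
      have h2 : (Real.exp 1)⁻¹ ≤ ((16:ℝ)/7)⁻¹ :=
        inv_anti₀ (by norm_num) hexp1
      calc (Real.exp 1)⁻¹ ≤ ((16:ℝ)/7)⁻¹ := h2
        _ = 7/16 := by norm_num
    have he9 : (9:ℝ)/16 ≤ 1 - Real.exp (-1) := by linarith
    have hq0 : (0:ℝ) ≤ q := ENNReal.toReal_nonneg
    have ha : p * (9/16) * (2*z*t) ≤ q * (1 - Real.exp (-1)) * ((t-m:ℕ):ℝ) := by
      have h1 : p * (9/16) ≤ q * (1 - Real.exp (-1)) :=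
        mul_le_mul hp_le he9 (by norm_num) hq0
      refine mul_le_mul h1 htm (by positivity) ?_
      exact mul_nonneg hq0 (by linarith)
    have hpz : p * z ≤ 1/4 := by nlinarith
    have hpzt : (0:ℝ) ≤ p * z * t := by positivity
    have h18 : (0:ℝ) ≤ 1/8 - p * z / 2 := by linarith
    nlinarith [ha, mul_nonneg hpzt h18]
  -- bound for each A j
  have hPA : ∀ j ∈ Finset.Icc 1 J, (M.P (A j)).toReal ≤
      Real.exp (-((δ m) ^ 2 / (2 * M.σ ^ 2))) := by
    intro j hjm
    rw [Finset.mem_Icc] at hjm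
    rw [hAdef]
    exact gauss_tail M hπ (t-1) j hjm.1 (hδpos m).le
  have hsum_le : (∑ j ∈ Finset.Icc 1 J, (M.P (A j)).toReal) ≤
      (J:ℝ) * Real.exp (-((δ m) ^ 2 / (2 * M.σ ^ 2))) := by
    calc (∑ j ∈ Finset.Icc 1 J, (M.P (A j)).toReal)
        ≤ ∑ _j ∈ Finset.Icc 1 J, Real.exp (-((δ m) ^ 2 / (2 * M.σ ^ 2))) :=
          Finset.sum_le_sum hPA
      _ = (Finset.Icc 1 J).card * Real.exp (-((δ m) ^ 2 / (2 * M.σ ^ 2))) := by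
          rw [Finset.sum_const, nsmul_eq_mul]
      _ = (J:ℝ) * Real.exp (-((δ m) ^ 2 / (2 * M.σ ^ 2))) := by
          rw [Nat.card_Icc]
          simp
  have h2nd : (J:ℝ) * Real.exp (-((δ m) ^ 2 / (2 * M.σ ^ 2))) ≤
      4 * z * t * Real.exp (-(δ m) ^ 2 / (4 * M.σ ^ 2)) := by
    have hJle : (J:ℝ) ≤ z * p * t := Nat.floor_le (by positivity)
    have hJle' : (J:ℝ) ≤ 4 * z * t := by nlinarith
    have hee : Real.exp (-((δ m) ^ 2 / (2 * M.σ ^ 2))) ≤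
        Real.exp (-(δ m) ^ 2 / (4 * M.σ ^ 2)) := by
      apply Real.exp_le_exp.2
      rw [neg_div]
      have hd : (δ m) ^ 2 / (4 * M.σ ^ 2) ≤ (δ m) ^ 2 / (2 * M.σ ^ 2) := by
        apply div_le_div_of_nonneg_left (sq_nonneg _) (by positivity) (by linarith)
      linarith
    have hJ0 : (0:ℝ) ≤ (J:ℝ) := Nat.cast_nonneg _
    exact mul_le_mul hJle' hee (Real.exp_pos _).le (by positivity)
  calc (M.P {ω | Tpulls π t ω ≤ z * p * t}).toReal
      ≤ (M.P B).toReal + ∑ j ∈ Finset.Icc 1 J, (M.P (A j)).toReal := hmeas_decomp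
    _ ≤ Real.exp (-(p ^ 2 * z ^ 2 * t) / 2) +
        4 * z * t * Real.exp (-(δ m) ^ 2 / (4 * M.σ ^ 2)) := by
        have := le_trans hsum_le h2nd
        linarith

end OneArmedBandit
end
end

section
/- (Analytic bound on the dyadic Gaussian-tail series.) For every b > 0 and every α with 0 < α ≤ 2b, the series S(α, b) := Σ_{k=0}^∞ 2^{−αk} exp( −b·2^{−2k} ) satisfies S(α, b) ≤ b^{−α/2} [ (α/2)^{α/2} / (1 − 2^{−α}) + Γ(α/2) / (2 ln 2) ], where Γ denotes the gamma function. -/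
open MeasureTheory Set Real

namespace DyadicGaussianAux

/-- The summand, as a function of a real variable. -/
noncomputable def gfun (α b : ℝ) (y : ℝ) : ℝ :=
  Real.exp (-(α * Real.log 2) * y - b * Real.exp (-(2 * Real.log 2) * y))

lemma gfun_nonneg (α b y : ℝ) : 0 ≤ gfun α b y := (Real.exp_pos _).le

lemma gfun_continuous (α b : ℝ) : Continuous (gfun α b) := by
  unfold gfun; fun_prop

/-- Change of variables: the `Γ` function as an integral over the whole real line. -/
lemma gamma_integral_line {s : ℝ} (hs : 0 < s) :
    (∫ x : ℝ, Real.exp (s * x - Real.exp x)) = Real.Gamma s ∧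
      Integrable (fun x : ℝ => Real.exp (s * x - Real.exp x)) := by
  have hderiv : ∀ x ∈ (univ : Set ℝ), HasDerivWithinAt Real.exp (Real.exp x) univ x :=
    fun x _ => (Real.hasDerivAt_exp x).hasDerivWithinAt
  have hinj : InjOn Real.exp univ := Real.exp_injective.injOn
  have himg : Real.exp '' univ = Ioi 0 := by
    rw [image_univ, Real.range_exp]
  have hkey : ∀ x : ℝ, |Real.exp x| • (Real.exp (-Real.exp x) * (Real.exp x) ^ (s - 1))
      = Real.exp (s * x - Real.exp x) := by
    intro x
    rw [abs_of_pos (Real.exp_pos x), smul_eq_mul,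
      Real.rpow_def_of_pos (Real.exp_pos x), Real.log_exp, ← Real.exp_add, ← Real.exp_add]
    ring_nf
  constructor
  · have := integral_image_eq_integral_abs_deriv_smul MeasurableSet.univ hderiv hinj
      (fun x => Real.exp (-x) * x ^ (s - 1))
    rw [himg] at this
    rw [Real.Gamma_eq_integral hs, this]
    rw [← setIntegral_univ]
    exact setIntegral_congr_fun MeasurableSet.univ (fun x _ => (hkey x).symm)
  · have := (integrableOn_image_iff_integrableOn_abs_deriv_smul MeasurableSet.univ hderiv hinj
      (fun x => Real.exp (-x) * x ^ (s - 1))).mp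
    rw [himg] at this
    have h2 := this (Real.GammaIntegral_convergent hs)
    rw [← integrableOn_univ]
    exact h2.congr_fun (fun x _ => hkey x) MeasurableSet.univ

lemma gfun_eq {α b : ℝ} (hb : 0 < b) (y : ℝ) :
    gfun α b y = b ^ (-(α/2)) *
      Real.exp ((α/2) * (-(2 * Real.log 2) * y + Real.log b)
        - Real.exp (-(2 * Real.log 2) * y + Real.log b)) := by
  rw [gfun, Real.rpow_def_of_pos hb, ← Real.exp_add,
    Real.exp_add (-(2 * Real.log 2) * y) (Real.log b), Real.exp_log hb]
  ring_nf

/-- The full-line integral of `gfun` equals `b^{-α/2} Γ(α/2) / (2 log 2)`. -/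
lemma gfun_integral {α b : ℝ} (hb : 0 < b) (hα : 0 < α) :
    (∫ y : ℝ, gfun α b y) = b ^ (-(α/2)) * Real.Gamma (α/2) / (2 * Real.log 2) ∧
      Integrable (gfun α b) := by
  set s := α/2 with hs
  have hs0 : 0 < s := by positivity
  set F : ℝ → ℝ := fun x => Real.exp (s * x - Real.exp x) with hF
  obtain ⟨hFint, hFintg⟩ := gamma_integral_line hs0
  have hc : (2 * Real.log 2) ≠ 0 := by
    have := Real.log_pos (by norm_num : (1:ℝ) < 2); positivity
  have hcomp : ∀ y : ℝ, gfun α b y = b ^ (-(α/2)) * F (-(2 * Real.log 2) * y + Real.log b) := by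
    intro y; rw [gfun_eq hb]
  have h1 : (∫ y : ℝ, F (-(2 * Real.log 2) * y + Real.log b))
      = |(-(2 * Real.log 2))⁻¹| • ∫ x : ℝ, F (x + Real.log b) :=
    MeasureTheory.Measure.integral_comp_mul_left (fun x => F (x + Real.log b)) _
  have h2 : (∫ x : ℝ, F (x + Real.log b)) = ∫ x : ℝ, F x :=
    integral_add_right_eq_self F (Real.log b)
  have hintc : Integrable (fun y : ℝ => F (-(2 * Real.log 2) * y + Real.log b)) :=
    (hFintg.comp_add_right (Real.log b)).comp_mul_left' (neg_ne_zero.mpr hc)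
  constructor
  · calc (∫ y : ℝ, gfun α b y)
        = ∫ y : ℝ, b ^ (-(α/2)) * F (-(2 * Real.log 2) * y + Real.log b) :=
          integral_congr_ae (Filter.Eventually.of_forall hcomp)
      _ = b ^ (-(α/2)) * ∫ y : ℝ, F (-(2 * Real.log 2) * y + Real.log b) := by
          rw [integral_const_mul]
      _ = b ^ (-(α/2)) * Real.Gamma s / (2 * Real.log 2) := by
          rw [h1, h2, hFint, abs_inv, abs_neg, abs_of_pos (by
            have := Real.log_pos (by norm_num : (1:ℝ) < 2); positivity)]
          simp only [smul_eq_mul]; ring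
  · have : Integrable (fun y => b ^ (-(α/2)) * F (-(2 * Real.log 2) * y + Real.log b)) :=
      hintc.const_mul _
    exact this.congr (Filter.Eventually.of_forall (fun y => (hcomp y).symm))

/-- Monotone to the left of the peak. -/
lemma gfun_mono {α b : ℝ} (hα : 0 < α) {y z : ℝ} (hyz : y ≤ z)
    (h : α ≤ 2 * b * Real.exp (-(2 * Real.log 2) * z)) :
    gfun α b y ≤ gfun α b z := by
  unfold gfun
  apply Real.exp_le_exp.mpr
  set c := Real.log 2 with hc
  have hc0 : 0 < c := Real.log_pos one_lt_two
  have hE : Real.exp (-(2*c)*y) = Real.exp (-(2*c)*z) * Real.exp (2*c*(z-y)) := by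
    rw [← Real.exp_add]; ring_nf
  have h1 : 2*c*(z-y) + 1 ≤ Real.exp (2*c*(z-y)) := Real.add_one_le_exp _
  have hEz : 0 < Real.exp (-(2*c)*z) := Real.exp_pos _
  have hd : 0 ≤ 2*c*(z-y) := by nlinarith
  nlinarith [mul_le_mul_of_nonneg_left h1 hEz.le, mul_le_mul_of_nonneg_right h hd,
    mul_le_mul_of_nonneg_right (mul_le_mul_of_nonneg_left h1 hEz.le) (le_of_lt hc0)]

/-- Antitone to the right of the peak. -/
lemma gfun_anti {α b : ℝ} (hα : 0 < α) (hb : 0 < b) {y z : ℝ} (hyz : y ≤ z)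
    (h : 2 * b * Real.exp (-(2 * Real.log 2) * y) ≤ α) :
    gfun α b z ≤ gfun α b y := by
  unfold gfun
  apply Real.exp_le_exp.mpr
  set c := Real.log 2 with hc
  have hc0 : 0 < c := Real.log_pos one_lt_two
  have hE : Real.exp (-(2*c)*z) = Real.exp (-(2*c)*y) * Real.exp (-(2*c*(z-y))) := by
    rw [← Real.exp_add]; ring_nf
  have h1 : -(2*c*(z-y)) + 1 ≤ Real.exp (-(2*c*(z-y))) := Real.add_one_le_exp _
  have hEy : 0 < Real.exp (-(2*c)*y) := Real.exp_pos _
  have hd : 0 ≤ 2*c*(z-y) := by nlinarith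
  nlinarith [mul_le_mul_of_nonneg_left h1 hEy.le, mul_le_mul_of_nonneg_right h hd]

/-- Bound by the peak value. -/
lemma gfun_peak {α b : ℝ} (hα : 0 < α) (hb : 0 < b) (y : ℝ) :
    gfun α b y ≤ b ^ (-(α/2)) * ((α/2) ^ (α/2) * Real.exp (-(α/2))) := by
  have hc0 : 0 < Real.log 2 := Real.log_pos one_lt_two
  set t := Real.exp (-(2 * Real.log 2) * y) with ht
  have ht0 : 0 < t := Real.exp_pos _
  have hq0 : 0 < α / (2*b) := by positivity
  have hrw : b ^ (-(α/2)) * ((α/2) ^ (α/2) * Real.exp (-(α/2)))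
      = Real.exp (Real.log (α/(2*b)) * (α/2) + (-(α/2))) := by
    rw [Real.exp_add, ← Real.rpow_def_of_pos hq0]
    have : (α/(2*b)) = (α/2) / b := by ring
    rw [this, Real.div_rpow (by positivity) hb.le, Real.rpow_neg hb.le]
    ring
  rw [hrw, gfun, ← ht]
  apply Real.exp_le_exp.mpr
  have hlt : Real.log t = -(2 * Real.log 2) * y := Real.log_exp _
  have hkey : Real.log (t * (2*b/α)) ≤ t * (2*b/α) - 1 :=
    Real.log_le_sub_one_of_pos (by positivity)
  rw [Real.log_mul ht0.ne' (by positivity)] at hkey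
  have hlog : Real.log (2*b/α) = - Real.log (α/(2*b)) := by
    rw [← Real.log_inv, inv_div]
  rw [hlog] at hkey
  have hmul := mul_le_mul_of_nonneg_left hkey (by positivity : (0:ℝ) ≤ α/2)
  have hfield : (α/2) * (t * (2*b/α) - 1) = b*t - α/2 := by field_simp
  nlinarith [hmul, hfield]

/-- A constant lower bound on an interval bounds the interval integral from below. -/
lemma const_le_integral {α b : ℝ} {u C : ℝ}
    (h : ∀ y ∈ Set.Icc u (u+1), C ≤ gfun α b y) :
    C ≤ ∫ y in u..(u+1), gfun α b y := by
  have h1 : (∫ _ in u..(u+1), C) ≤ ∫ y in u..(u+1), gfun α b y :=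
    intervalIntegral.integral_mono_on (by linarith) intervalIntegrable_const
      ((gfun_continuous α b).intervalIntegrable _ _) h
  rwa [intervalIntegral.integral_const, add_sub_cancel_left, one_smul] at h1

end DyadicGaussianAux

open DyadicGaussianAux

/-- The analytic bound on the dyadic Gaussian-tail series used in the proof of
Theorem 2: for every `b > 0` and every `α` with `0 < α ≤ 2b`,
`S(α, b) = ∑_{k=0}^∞ 2^{−αk} exp(−b 2^{−2k})
  ≤ b^{−α/2} [(α/2)^{α/2}/(1 − 2^{−α}) + Γ(α/2)/(2 ln 2)]`. -/
theorem dyadic_gaussian_series_bound (α b : ℝ) (hb : 0 < b) (hα : 0 < α)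
    (hαb : α ≤ 2 * b) :
    ∑' k : ℕ, (2 : ℝ) ^ (-(α * (k : ℝ))) * Real.exp (-b * 2 ^ (-(2 * (k : ℝ)))) ≤
      b ^ (-(α / 2)) *
        ((α / 2) ^ (α / 2) / (1 - (2 : ℝ) ^ (-α)) +
          Real.Gamma (α / 2) / (2 * Real.log 2)) := by
  have hc0 : 0 < Real.log 2 := Real.log_pos one_lt_two
  -- rewrite the summand
  have hterm : ∀ k : ℕ,
      (2 : ℝ) ^ (-(α * (k : ℝ))) * Real.exp (-b * 2 ^ (-(2 * (k : ℝ)))) = gfun α b k := by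
    intro k
    rw [gfun, Real.rpow_def_of_pos two_pos, Real.rpow_def_of_pos two_pos]
    have e1 : Real.log 2 * (-(α * (k:ℝ))) = -(α * Real.log 2) * k := by ring
    have e2 : Real.log 2 * (-(2 * (k:ℝ))) = -(2 * Real.log 2) * k := by ring
    rw [e1, e2, ← Real.exp_add]
    ring_nf
  rw [tsum_congr hterm]
  -- the peak location
  set ystar : ℝ := Real.log (2*b/α) / (2 * Real.log 2) with hystar
  have h2ba : 1 ≤ 2*b/α := (one_le_div hα).mpr hαb
  have hy0 : 0 ≤ ystar := div_nonneg (Real.log_nonneg h2ba) (by positivity)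
  set m : ℕ := ⌊ystar⌋₊ with hm
  have hm_le : (m:ℝ) ≤ ystar := Nat.floor_le hy0
  have hm_lt : ystar < m + 1 := Nat.lt_floor_add_one ystar
  have hEy : Real.exp (-(2 * Real.log 2) * ystar) = α/(2*b) := by
    have harg : -(2 * Real.log 2) * ystar = - Real.log (2*b/α) := by
      rw [hystar]; field_simp
    rw [harg, Real.exp_neg, Real.exp_log (by positivity), inv_div]
  have hcond1 : ∀ y : ℝ, y ≤ ystar → α ≤ 2*b*Real.exp (-(2 * Real.log 2) * y) := by
    intro y hy
    have hmono : Real.exp (-(2 * Real.log 2) * ystar) ≤ Real.exp (-(2 * Real.log 2) * y) :=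
      Real.exp_le_exp.mpr (by nlinarith)
    rw [hEy] at hmono
    have := (div_le_iff₀ (by positivity : (0:ℝ) < 2*b)).mp hmono
    linarith
  have hcond2 : ∀ y : ℝ, ystar ≤ y → 2*b*Real.exp (-(2 * Real.log 2) * y) ≤ α := by
    intro y hy
    have hmono : Real.exp (-(2 * Real.log 2) * y) ≤ Real.exp (-(2 * Real.log 2) * ystar) :=
      Real.exp_le_exp.mpr (by nlinarith)
    rw [hEy] at hmono
    have := (le_div_iff₀ (by positivity : (0:ℝ) < 2*b)).mp hmono
    linarith
  -- integrability and integral value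
  obtain ⟨hival, hint⟩ := gfun_integral hb hα
  -- peak value
  set P : ℝ := b ^ (-(α/2)) * ((α/2) ^ (α/2) * Real.exp (-(α/2))) with hP
  -- per-interval bounds, left of peak
  have hIk : ∀ k : ℕ, k + 1 ≤ m →
      gfun α b k ≤ ∫ y in ((k:ℕ):ℝ)..(((k+1:ℕ)):ℝ), gfun α b y := by
    intro k hk
    have hc : (((k+1:ℕ)):ℝ) = ((k:ℕ):ℝ) + 1 := by push_cast; ring
    rw [hc]
    apply const_le_integral
    intro y hy
    have hkm : (k:ℝ) + 1 ≤ (m:ℝ) := by exact_mod_cast hk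
    exact gfun_mono hα hy.1 (hcond1 y (by linarith [hy.2, hm_le]))
  -- per-interval bounds, right of peak
  have hJk : ∀ j : ℕ, gfun α b ((m+2+j : ℕ):ℝ) ≤
      ∫ y in ((m:ℝ)+1+((j:ℕ):ℝ))..((m:ℝ)+1+(((j+1:ℕ)):ℝ)), gfun α b y := by
    intro j
    have hc : (m:ℝ)+1+(((j+1:ℕ)):ℝ) = ((m:ℝ)+1+((j:ℕ):ℝ)) + 1 := by push_cast; ring
    rw [hc]
    apply const_le_integral
    intro y hy
    have hcast : ((m+2+j : ℕ) : ℝ) = (m:ℝ)+1+(j:ℝ)+1 := by push_cast; ring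
    rw [hcast]
    exact gfun_anti hα hb hy.2 (hcond2 y (by linarith [hy.1, hm_lt]))
  -- partial sums are bounded
  have hpartial : ∀ M : ℕ, ∑ k ∈ Finset.range (m+2+M), gfun α b k ≤
      (∫ y : ℝ, gfun α b y) + 2*P := by
    intro M
    have hsplit : ∑ k ∈ Finset.range (m+2+M), gfun α b k
        = (∑ k ∈ Finset.range m, gfun α b k) + gfun α b ((m:ℕ):ℝ)
          + gfun α b (((m+1:ℕ)):ℝ)
          + ∑ j ∈ Finset.range M, gfun α b (((m+2+j:ℕ)):ℝ) := by
      rw [← Finset.sum_range_add_sum_Ico _ (by omega : m+2 ≤ m+2+M),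
        Finset.sum_Ico_eq_sum_range]
      simp only [Nat.add_sub_cancel_left]
      rw [Finset.sum_range_succ, Finset.sum_range_succ]
    have hsum1 : ∑ k ∈ Finset.range m, gfun α b k ≤ ∫ y in Iic (m:ℝ), gfun α b y := by
      have hadj : ∑ k ∈ Finset.range m, ∫ y in ((k:ℕ):ℝ)..(((k+1:ℕ)):ℝ), gfun α b y
          = ∫ y in ((0:ℕ):ℝ)..((m:ℕ):ℝ), gfun α b y :=
        intervalIntegral.sum_integral_adjacent_intervals
          (fun k _ => (gfun_continuous α b).intervalIntegrable _ _)
      have hstep : ∑ k ∈ Finset.range m, gfun α b k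
          ≤ ∑ k ∈ Finset.range m, ∫ y in ((k:ℕ):ℝ)..(((k+1:ℕ)):ℝ), gfun α b y :=
        Finset.sum_le_sum (fun k hk => hIk k (Finset.mem_range.mp hk))
      have heq : (∫ y in ((0:ℕ):ℝ)..((m:ℕ):ℝ), gfun α b y)
          = ∫ y in Ioc (0:ℝ) (m:ℝ), gfun α b y := by
        rw [intervalIntegral.integral_of_le (by exact_mod_cast Nat.zero_le m)]
        norm_num
      have hle : (∫ y in Ioc (0:ℝ) (m:ℝ), gfun α b y) ≤ ∫ y in Iic (m:ℝ), gfun α b y := by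
        apply setIntegral_mono_set hint.integrableOn
          (Filter.Eventually.of_forall (fun y => gfun_nonneg α b y))
        exact Filter.Eventually.of_forall (fun y hy => hy.2)
      calc ∑ k ∈ Finset.range m, gfun α b k
          ≤ ∑ k ∈ Finset.range m, ∫ y in ((k:ℕ):ℝ)..(((k+1:ℕ)):ℝ), gfun α b y := hstep
        _ = ∫ y in Ioc (0:ℝ) (m:ℝ), gfun α b y := by rw [hadj, heq]
        _ ≤ _ := hle
    have hsum2 : ∑ j ∈ Finset.range M, gfun α b (((m+2+j:ℕ)):ℝ)
        ≤ ∫ y in Ioi (m:ℝ), gfun α b y := by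
      have hadj : ∑ j ∈ Finset.range M,
            ∫ y in ((m:ℝ)+1+((j:ℕ):ℝ))..((m:ℝ)+1+(((j+1:ℕ)):ℝ)), gfun α b y
          = ∫ y in ((m:ℝ)+1+(((0:ℕ)):ℝ))..((m:ℝ)+1+((M:ℕ):ℝ)), gfun α b y :=
        intervalIntegral.sum_integral_adjacent_intervals
          (a := fun n : ℕ => (m:ℝ)+1+(n:ℝ))
          (fun k _ => (gfun_continuous α b).intervalIntegrable _ _)
      have hstep : ∑ j ∈ Finset.range M, gfun α b (((m+2+j:ℕ)):ℝ)
          ≤ ∑ j ∈ Finset.range M,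
              ∫ y in ((m:ℝ)+1+((j:ℕ):ℝ))..((m:ℝ)+1+(((j+1:ℕ)):ℝ)), gfun α b y :=
        Finset.sum_le_sum (fun j _ => hJk j)
      have heq : (∫ y in ((m:ℝ)+1+(((0:ℕ)):ℝ))..((m:ℝ)+1+((M:ℕ):ℝ)), gfun α b y)
          = ∫ y in Ioc ((m:ℝ)+1) ((m:ℝ)+1+(M:ℕ)), gfun α b y := by
        rw [intervalIntegral.integral_of_le
          (by have : (0:ℝ) ≤ (M:ℝ) := Nat.cast_nonneg M; push_cast; linarith)]
        norm_num
      have hle : (∫ y in Ioc ((m:ℝ)+1) ((m:ℝ)+1+(M:ℕ)), gfun α b y)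
          ≤ ∫ y in Ioi (m:ℝ), gfun α b y := by
        apply setIntegral_mono_set hint.integrableOn
          (Filter.Eventually.of_forall (fun y => gfun_nonneg α b y))
        exact Filter.Eventually.of_forall
          (fun y hy => mem_Ioi.mpr (show (m:ℝ) < y by have h1 : (m:ℝ) + 1 < y := (mem_Ioc.mp hy).1; linarith))
      calc ∑ j ∈ Finset.range M, gfun α b (((m+2+j:ℕ)):ℝ)
          ≤ ∑ j ∈ Finset.range M,
              ∫ y in ((m:ℝ)+1+((j:ℕ):ℝ))..((m:ℝ)+1+(((j+1:ℕ)):ℝ)), gfun α b y := hstep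
        _ = ∫ y in Ioc ((m:ℝ)+1) ((m:ℝ)+1+(M:ℕ)), gfun α b y := by rw [hadj, heq]
        _ ≤ _ := hle
    have htotal : (∫ y in Iic (m:ℝ), gfun α b y) + (∫ y in Ioi (m:ℝ), gfun α b y)
        = ∫ y : ℝ, gfun α b y :=
      intervalIntegral.integral_Iic_add_Ioi hint.integrableOn hint.integrableOn
    have hpk1 : gfun α b ((m:ℕ):ℝ) ≤ P := gfun_peak hα hb _
    have hpk2 : gfun α b (((m+1:ℕ)):ℝ) ≤ P := gfun_peak hα hb _
    rw [hsplit]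
    linarith
  -- conclude via tsum
  have hbound : ∀ N : ℕ, ∑ k ∈ Finset.range N, gfun α b k ≤
      (∫ y : ℝ, gfun α b y) + 2*P := by
    intro N
    calc ∑ k ∈ Finset.range N, gfun α b k
        ≤ ∑ k ∈ Finset.range (m+2+N), gfun α b k := by
          apply Finset.sum_le_sum_of_subset_of_nonneg
          · exact Finset.range_subset_range.mpr (by omega)
          · exact fun k _ _ => gfun_nonneg α b k
      _ ≤ _ := hpartial N
  have hfinal : (∫ y : ℝ, gfun α b y) + 2*P ≤
      b ^ (-(α / 2)) *
        ((α / 2) ^ (α / 2) / (1 - (2 : ℝ) ^ (-α)) + Real.Gamma (α / 2) / (2 * Real.log 2)) := by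
    rw [hival, hP]
    have h2a : (2:ℝ) ^ (-α) < 1 :=
      Real.rpow_lt_one_of_one_lt_of_neg one_lt_two (by linarith)
    have h1m : 0 < 1 - (2:ℝ) ^ (-α) := by linarith
    have hB0 : (0:ℝ) < b ^ (-(α/2)) := Real.rpow_pos_of_pos hb _
    have hA0 : (0:ℝ) < (α/2) ^ (α/2) := Real.rpow_pos_of_pos (by positivity) _
    set u : ℝ := Real.exp (-(α/2)) with hu
    have hu0 : 0 < u := Real.exp_pos _
    have hu1 : u < 1 := Real.exp_lt_one_iff.mpr (by linarith)
    have husq : u^2 = Real.exp (-α) := by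
      rw [hu, sq, ← Real.exp_add]
      ring_nf
    have hq_ge : Real.exp (-α) ≤ (2:ℝ) ^ (-α) := by
      rw [Real.rpow_def_of_pos two_pos]
      apply Real.exp_le_exp.mpr
      nlinarith [Real.log_two_lt_d9, Real.log_two_gt_d9]
    have hkey : 2*u*(1 - (2:ℝ) ^ (-α)) ≤ 1 := by
      have h1 : 2*u*(1 - (2:ℝ) ^ (-α)) ≤ 2*u*(1 - u^2) := by
        rw [husq]
        nlinarith [hq_ge, hu0]
      nlinarith [hu0, hu1, mul_nonneg hu0.le (sq_nonneg (u - 1/2)),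
        mul_nonneg hu0.le (sq_nonneg (u - 3/5)), sq_nonneg (u - 3/5), sq_nonneg u]
    have h2u : 2*u ≤ 1 / (1 - (2:ℝ) ^ (-α)) := by
      rw [le_div_iff₀ h1m]
      linarith
    have hmul := mul_le_mul_of_nonneg_left h2u (mul_pos hB0 hA0).le
    calc b ^ (-(α/2)) * Real.Gamma (α/2) / (2 * Real.log 2)
          + 2 * (b ^ (-(α/2)) * ((α/2) ^ (α/2) * u))
        = b ^ (-(α/2)) * (α/2) ^ (α/2) * (2*u)
          + b ^ (-(α/2)) * Real.Gamma (α/2) / (2 * Real.log 2) := by ring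
      _ ≤ b ^ (-(α/2)) * (α/2) ^ (α/2) * (1 / (1 - (2:ℝ) ^ (-α)))
          + b ^ (-(α/2)) * Real.Gamma (α/2) / (2 * Real.log 2) := by linarith
      _ = b ^ (-(α / 2)) *
          ((α / 2) ^ (α / 2) / (1 - (2 : ℝ) ^ (-α))
            + Real.Gamma (α / 2) / (2 * Real.log 2)) := by ring
  calc ∑' k : ℕ, gfun α b k ≤ (∫ y : ℝ, gfun α b y) + 2*P :=
        Real.tsum_le_of_sum_range_le (fun n => gfun_nonneg α b n) hbound
    _ ≤ _ := hfinal
end
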